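/- A train-track of a rhombus tiling of the plane cannot cross itself, and two distinct train-tracks can cross at most once. -/

import Mathlib

noncomputable section
open Complex Set

/-- A rhombus in the plane `ℂ`, recorded by its four vertices in counterclockwise
cyclic order. -/
structure Rhombus where
  v : ZMod 4 → ℂ
  para : v 0 + v 2 = v 1 + v 3
  sides : ∀ i, dist (v i) (v (i + 1)) = dist (v 0) (v 1)
  nondeg : v 0 ≠ v 2 ∧ v 1 ≠ v 3

def Rhombus.center (r : Rhombus) : ℂ := (r.v 0 + r.v 2) / 2
def Rhombus.region (r : Rhombus) : Set ℂ := convexHull ℝ (Set.range r.v)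
def Rhombus.side (r : Rhombus) (i : ZMod 4) : Set ℂ := segment ℝ (r.v i) (r.v (i + 1))
def Rhombus.sideEnds (r : Rhombus) (i : ZMod 4) : Set ℂ := {r.v i, r.v (i + 1)}

/-- An edge-to-edge rhombus tiling of the whole plane, with side length 2 and
finitely many rhombus angles. -/
structure RhombusTiling where
  rhombi : Set Rhombus
  covers : ∀ p : ℂ, ∃ r ∈ rhombi, p ∈ r.region
  int_disjoint : ∀ r ∈ rhombi, ∀ r' ∈ rhombi, r ≠ r' →
    interior r.region ∩ interior r'.region = ∅
  edge_to_edge : ∀ r ∈ rhombi, ∀ r' ∈ rhombi, ∀ i j : ZMod 4,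
    ¬ (r.side i ∩ r'.side j).Subsingleton → r.sideEnds i = r'.sideEnds j
  side_two : ∀ r ∈ rhombi, dist (r.v 0) (r.v 1) = 2
  finite_angles : {d : ℝ | ∃ r ∈ rhombi, d = dist (r.v 0) (r.v 2)}.Finite

/-- `AdjSide r r' i` : the rhombi `r` and `r'` are distinct and glued along the side `i`
of `r`. -/
def AdjSide (r r' : Rhombus) (i : ZMod 4) : Prop :=
  r ≠ r' ∧ ∃ j : ZMod 4, r.sideEnds i = r'.sideEnds j

/-- A train-track of the rhombus tiling `T`: a bi-infinite path of rhombi of `T`, each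
adjacent along an edge to the previous one, which on entering a rhombus exits across
the opposite edge. -/
structure TrainTrack (T : RhombusTiling) where
  seq : ℤ → Rhombus
  mem : ∀ n, seq n ∈ T.rhombi
  straight : ∀ n : ℤ, ∃ i : ZMod 4,
    AdjSide (seq n) (seq (n - 1)) i ∧ AdjSide (seq n) (seq (n + 1)) (i + 2)

set_option maxHeartbeats 1000000

lemma zmod4_cases (i : ZMod 4) : i = 0 ∨ i = 1 ∨ i = 2 ∨ i = 3 := by revert i; decide

namespace Rhombus

variable (r : Rhombus)

/-- side vector -/
def s (i : ZMod 4) : ℂ := r.v (i+1) - r.v i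

lemma para' (i : ZMod 4) : r.v i + r.v (i+2) = r.v (i+1) + r.v (i+3) := by
  rcases zmod4_cases i with h | h | h | h <;> subst h
  · simpa using r.para
  · simp only [show ((1:ZMod 4)+2) = 3 by decide, show ((1:ZMod 4)+1) = 2 by decide,
      show ((1:ZMod 4)+3) = 0 by decide]
    linear_combination -r.para
  · simp only [show ((2:ZMod 4)+2) = 0 by decide, show ((2:ZMod 4)+1) = 3 by decide,
      show ((2:ZMod 4)+3) = 1 by decide]
    linear_combination r.para
  · simp only [show ((3:ZMod 4)+2) = 1 by decide, show ((3:ZMod 4)+1) = 0 by decide,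
      show ((3:ZMod 4)+3) = 2 by decide]
    linear_combination -r.para

lemma v_one (i : ZMod 4) : r.v (i+1) = r.v i + r.s i := by simp [s]

lemma s_two (i : ZMod 4) : r.s (i+2) = - r.s i := by
  have h := r.para' i
  simp only [s]
  have e1 : i + 2 + 1 = i + 3 := by ring
  rw [e1]
  linear_combination -h

lemma v_three (i : ZMod 4) : r.v (i+3) = r.v i + r.s (i+1) := by
  have h := r.para' i
  simp only [s]
  have e1 : i + 1 + 1 = i + 2 := by ring
  rw [e1]
  linear_combination -h

lemma v_two (i : ZMod 4) : r.v (i+2) = r.v i + r.s i + r.s (i+1) := by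
  rw [show i+2 = (i+1)+1 by ring, r.v_one (i+1), r.v_one i]

lemma norm_s (i : ZMod 4) : ‖r.s i‖ = dist (r.v 0) (r.v 1) := by
  rw [← r.sides i, dist_eq_norm, s, norm_sub_rev]

lemma v_ne (i : ZMod 4) : r.v i ≠ r.v (i+2) := by
  rcases zmod4_cases i with h | h | h | h <;> subst h
  · simpa using r.nondeg.1
  · simpa only [show ((1:ZMod 4)+2) = 3 by decide] using r.nondeg.2
  · simp only [show ((2:ZMod 4)+2) = 0 by decide]
    exact (r.nondeg.1).symm
  · simp only [show ((3:ZMod 4)+2) = 1 by decide]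
    exact (r.nondeg.2).symm

lemma s_ne (i : ZMod 4) : r.s i ≠ 0 := by
  intro h
  have h0 : dist (r.v 0) (r.v 1) = 0 := by rw [← r.norm_s i, h, norm_zero]
  have h1 : r.s i = 0 ∧ r.s (i+1) = 0 := by
    constructor <;> · rw [← norm_eq_zero, r.norm_s, h0]
  have := r.v_two i
  rw [h1.1, h1.2] at this
  simp at this
  exact r.v_ne i this.symm

/-- the two side directions are independent: ratio is non-real -/
lemma ratio_im (i : ZMod 4) : ((r.s (i+1)) / (r.s i)).im ≠ 0 := by
  intro h
  set z := r.s (i+1) / r.s i with hz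
  have hsi := r.s_ne i
  have hmul : r.s (i+1) = z * r.s i := by rw [hz, div_mul_cancel₀ _ hsi]
  have hnorm : ‖z‖ = 1 := by
    have h1 : ‖r.s (i+1)‖ = ‖z‖ * ‖r.s i‖ := by rw [hmul, norm_mul]
    have h2 : ‖r.s (i+1)‖ = ‖r.s i‖ := by rw [r.norm_s, r.norm_s]
    have h3 : ‖r.s i‖ ≠ 0 := norm_ne_zero_iff.mpr hsi
    refine mul_right_cancel₀ h3 ?_
    rw [one_mul, ← h1, h2]
  have hre : z = (z.re : ℂ) := by
    apply Complex.ext <;> simp [h]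
  have : z.re = 1 ∨ z.re = -1 := by
    have : |z.re| = 1 := by
      rw [hre] at hnorm
      simpa using hnorm
    rcases abs_eq (by norm_num : (0:ℝ) ≤ 1) |>.mp this with h' | h' <;> tauto
  rcases this with h' | h'
  · -- s(i+1) = s i, so v(i+3) = v(i+1), contradicting v_ne (i+1)
    have hs : r.s (i+1) = r.s i := by rw [hmul, hre, h']; simp
    have := r.v_three i
    rw [hs] at this
    rw [← r.v_one i] at this
    exact r.v_ne (i+1) (this.symm.trans (by rw [show i+3 = (i+1)+2 by ring]))
  · have hs : r.s (i+1) = - r.s i := by rw [hmul, hre, h']; simp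
    have := r.v_two i
    rw [hs] at this
    simp at this
    exact r.v_ne i this.symm

end Rhombus

namespace Rhombus

variable (r : Rhombus)

/-- second coordinate of `x` in the frame based at vertex `i` -/
def cb (i : ZMod 4) (x : ℂ) : ℝ :=
  ((x - r.v i) / r.s i).im / ((r.s (i+1)) / (r.s i)).im

/-- first coordinate of `x` in the frame based at vertex `i` -/
def ca (i : ZMod 4) (x : ℂ) : ℝ :=
  ((x - r.v i) / r.s i).re - (r.cb i x) * ((r.s (i+1)) / (r.s i)).re

lemma reprn (i : ZMod 4) (x : ℂ) :
    x = r.v i + (r.ca i x) • r.s i + (r.cb i x) • r.s (i+1) := by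
  have hu : r.s i ≠ 0 := r.s_ne i
  have hir := r.ratio_im i
  have hmul : r.s (i+1) = (r.s (i+1) / r.s i) * r.s i := by field_simp
  have key : ((r.ca i x : ℂ) + (r.cb i x : ℂ) * (r.s (i+1) / r.s i)) = (x - r.v i) / r.s i := by
    apply Complex.ext
    · simp [ca]
    · simp only [Complex.add_im, Complex.ofReal_im, Complex.mul_im, Complex.ofReal_re, cb]
      field_simp
      ring
  calc x = r.v i + ((x - r.v i) / r.s i) * r.s i := by field_simp; ring
  _ = r.v i + ((r.ca i x : ℂ) + (r.cb i x : ℂ) * (r.s (i+1) / r.s i)) * r.s i := by rw [key]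
  _ = r.v i + (r.ca i x) • r.s i + (r.cb i x) • r.s (i+1) := by
      rw [Complex.real_smul, Complex.real_smul]
      field_simp
      ring

lemma indep {i : ZMod 4} {a b : ℝ} (h : a • r.s i + b • r.s (i+1) = 0) : a = 0 ∧ b = 0 := by
  have hu : r.s i ≠ 0 := r.s_ne i
  have hir := r.ratio_im i
  have key : (a : ℂ) + (b : ℂ) * (r.s (i+1) / r.s i) = 0 := by
    have h' : ((a:ℂ) + (b:ℂ) * (r.s (i+1) / r.s i)) * r.s i = 0 := by
      rw [Complex.real_smul, Complex.real_smul] at h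
      field_simp
      linear_combination h
    rcases mul_eq_zero.mp h' with h'' | h''
    · exact h''
    · exact absurd h'' hu
  have him := congrArg Complex.im key
  simp only [Complex.add_im, Complex.ofReal_im, Complex.mul_im, Complex.ofReal_re,
    Complex.zero_im] at him
  have hb : b = 0 := by
    rcases mul_eq_zero.mp (by linarith : b * (r.s (i+1) / r.s i).im = 0) with h'' | h''
    · exact h''
    · exact absurd h'' hir
  have hre := congrArg Complex.re key
  simp [hb] at hre
  exact ⟨hre, hb⟩

lemma coords_spec (i : ZMod 4) (a b : ℝ) :
    r.ca i (r.v i + a • r.s i + b • r.s (i+1)) = a ∧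
    r.cb i (r.v i + a • r.s i + b • r.s (i+1)) = b := by
  set x := r.v i + a • r.s i + b • r.s (i+1) with hx
  have h1 := r.reprn i x
  have h2 : (r.ca i x - a) • r.s i + (r.cb i x - b) • r.s (i+1) = 0 := by
    rw [sub_smul, sub_smul]
    have : r.v i + r.ca i x • r.s i + r.cb i x • r.s (i+1) =
        r.v i + a • r.s i + b • r.s (i+1) := by rw [← h1]
    linear_combination this
  have := r.indep h2
  constructor <;> linarith [this.1, this.2]

lemma cb_shift (i : ZMod 4) (x : ℂ) (c : ℝ) :
    r.cb i (x + c • r.s (i+1)) = r.cb i x + c := by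
  have h1 := r.reprn i x
  nth_rewrite 1 [h1]
  have : r.v i + r.ca i x • r.s i + r.cb i x • r.s (i+1) + c • r.s (i+1)
      = r.v i + r.ca i x • r.s i + (r.cb i x + c) • r.s (i+1) := by
    rw [add_smul]; ring
  rw [this, (r.coords_spec i _ _).2]

lemma mem_region (i : ZMod 4) {a b : ℝ} (ha : a ∈ Icc (0:ℝ) 1) (hb : b ∈ Icc (0:ℝ) 1) :
    r.v i + a • r.s i + b • r.s (i+1) ∈ r.region := by
  have hhull := convex_convexHull ℝ (Set.range r.v)
  have hv : ∀ j, r.v j ∈ r.region := fun j => subset_convexHull ℝ _ ⟨j, rfl⟩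
  have hp1 : r.v i + a • r.s i ∈ r.region := by
    have : r.v i + a • r.s i = (1-a) • r.v i + a • r.v (i+1) := by
      rw [r.v_one i]; rw [sub_smul, smul_add]; module
    rw [this]
    exact hhull.segment_subset (hv i) (hv (i+1)) ⟨1-a, a, by linarith [ha.2], ha.1, by ring, rfl⟩
  have hp2 : r.v (i+3) + a • r.s i ∈ r.region := by
    have hv2 : r.v (i+2) = r.v (i+3) + r.s i := by
      rw [r.v_two i, r.v_three i]; ring
    have : r.v (i+3) + a • r.s i = (1-a) • r.v (i+3) + a • r.v (i+2) := by
      rw [hv2]; rw [sub_smul, smul_add]; module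
    rw [this]
    exact hhull.segment_subset (hv (i+3)) (hv (i+2)) ⟨1-a, a, by linarith [ha.2], ha.1, by ring, rfl⟩
  have key : r.v i + a • r.s i + b • r.s (i+1) =
      (1-b) • (r.v i + a • r.s i) + b • (r.v (i+3) + a • r.s i) := by
    rw [r.v_three i]
    rw [sub_smul, smul_add, smul_add]
    module
  rw [key]
  exact hhull.segment_subset hp1 hp2 ⟨1-b, b, by linarith [hb.2], hb.1, by ring, rfl⟩

lemma region_sub (i : ZMod 4) :
    r.region ⊆ {x | r.ca i x ∈ Icc (0:ℝ) 1 ∧ r.cb i x ∈ Icc (0:ℝ) 1} := by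
  apply convexHull_min
  · rintro x ⟨j, rfl⟩
    obtain ⟨m, rfl⟩ : ∃ m, j = i + m := ⟨j - i, by ring⟩
    have h0 : (0:ℝ) ∈ Icc (0:ℝ) 1 := by norm_num
    have h1 : (1:ℝ) ∈ Icc (0:ℝ) 1 := by norm_num
    rcases zmod4_cases m with hm | hm | hm | hm <;> subst hm
    · have : r.v (i + 0) = r.v i + (0:ℝ) • r.s i + (0:ℝ) • r.s (i+1) := by
        simp
      rw [this]; rw [Set.mem_setOf_eq, (r.coords_spec i 0 0).1, (r.coords_spec i 0 0).2]
      exact ⟨h0, h0⟩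
    · have : r.v (i + 1) = r.v i + (1:ℝ) • r.s i + (0:ℝ) • r.s (i+1) := by
        rw [r.v_one i]; simp
      rw [this]; rw [Set.mem_setOf_eq, (r.coords_spec i 1 0).1, (r.coords_spec i 1 0).2]
      exact ⟨h1, h0⟩
    · have : r.v (i + 2) = r.v i + (1:ℝ) • r.s i + (1:ℝ) • r.s (i+1) := by
        rw [r.v_two i]; simp
      rw [this]; rw [Set.mem_setOf_eq, (r.coords_spec i 1 1).1, (r.coords_spec i 1 1).2]
      exact ⟨h1, h1⟩
    · have : r.v (i + 3) = r.v i + (0:ℝ) • r.s i + (1:ℝ) • r.s (i+1) := by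
        rw [r.v_three i]; simp
      rw [this]; rw [Set.mem_setOf_eq, (r.coords_spec i 0 1).1, (r.coords_spec i 0 1).2]
      exact ⟨h0, h1⟩
  · -- convexity
    have hcomb : ∀ (t u : ℝ) (x y : ℂ), t + u = 1 →
        ((t • x + u • y - r.v i) / r.s i) = t • ((x - r.v i)/ r.s i) + u • ((y - r.v i)/r.s i) := by
      intro t u x y htu
      have hnum : t • x + u • y - r.v i = t • (x - r.v i) + u • (y - r.v i) := by
        have hv : r.v i = t • r.v i + u • r.v i := by rw [← add_smul, htu, one_smul]
        calc t • x + u • y - r.v i = t • x + u • y - (t • r.v i + u • r.v i) := by rw [← hv]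
        _ = t • (x - r.v i) + u • (y - r.v i) := by rw [smul_sub, smul_sub]; ring
      rw [hnum, add_div]
      rw [Complex.real_smul, Complex.real_smul, Complex.real_smul, Complex.real_smul,
        mul_div_assoc, mul_div_assoc]
    have hcb : ∀ (t u : ℝ) (x y : ℂ), t + u = 1 →
        r.cb i (t • x + u • y) = t * r.cb i x + u * r.cb i y := by
      intro t u x y htu
      simp only [cb, hcomb t u x y htu]
      rw [Complex.add_im, Complex.real_smul, Complex.real_smul]
      simp only [Complex.mul_im, Complex.ofReal_re, Complex.ofReal_im]
      ring
    have hca : ∀ (t u : ℝ) (x y : ℂ), t + u = 1 →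
        r.ca i (t • x + u • y) = t * r.ca i x + u * r.ca i y := by
      intro t u x y htu
      simp only [ca, hcomb t u x y htu, hcb t u x y htu]
      rw [Complex.add_re, Complex.real_smul, Complex.real_smul]
      simp only [Complex.mul_re, Complex.ofReal_re, Complex.ofReal_im]
      ring
    rintro x hx y hy t u ht hu htu
    constructor
    · rw [Set.mem_setOf_eq] at hx hy
      rw [hca t u x y htu]
      have := (convex_Icc (0:ℝ) 1) hx.1 hy.1 ht hu htu
      simpa using this
    · rw [Set.mem_setOf_eq] at hx hy
      rw [hcb t u x y htu]
      have := (convex_Icc (0:ℝ) 1) hx.2 hy.2 ht hu htu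
      simpa using this

lemma continuous_cb (i : ZMod 4) : Continuous (r.cb i) := by
  unfold cb; fun_prop

lemma continuous_ca (i : ZMod 4) : Continuous (r.ca i) := by
  unfold ca cb; fun_prop

lemma mem_interior (i : ZMod 4) {a b : ℝ} (ha : a ∈ Ioo (0:ℝ) 1) (hb : b ∈ Ioo (0:ℝ) 1) :
    r.v i + a • r.s i + b • r.s (i+1) ∈ interior r.region := by
  have hopen : IsOpen {x | r.ca i x ∈ Ioo (0:ℝ) 1 ∧ r.cb i x ∈ Ioo (0:ℝ) 1} := by
    apply IsOpen.inter
    · exact isOpen_Ioo.preimage (r.continuous_ca i)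
    · exact isOpen_Ioo.preimage (r.continuous_cb i)
  have hsub : {x | r.ca i x ∈ Ioo (0:ℝ) 1 ∧ r.cb i x ∈ Ioo (0:ℝ) 1} ⊆ r.region := by
    intro x hx
    rw [Set.mem_setOf_eq] at hx
    have := r.reprn i x
    rw [this]
    exact r.mem_region i (Ioo_subset_Icc_self hx.1) (Ioo_subset_Icc_self hx.2)
  apply interior_maximal hsub hopen
  rw [Set.mem_setOf_eq, (r.coords_spec i a b).1, (r.coords_spec i a b).2]
  exact ⟨ha, hb⟩

lemma not_interior (i : ZMod 4) {a : ℝ} :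
    r.v i + a • r.s i ∉ interior r.region := by
  intro hmem
  set x := r.v i + a • r.s i with hx
  have hcb : r.cb i x = 0 := by
    have : x = r.v i + a • r.s i + (0:ℝ) • r.s (i+1) := by simp [hx]
    rw [this, (r.coords_spec i a 0).2]
  rcases Metric.isOpen_iff.mp isOpen_interior x hmem with ⟨ε, hε, hball⟩
  set c : ℝ := -(ε / (2 * ‖r.s (i+1)‖)) with hc
  have hs1 : ‖r.s (i+1)‖ > 0 := norm_pos_iff.mpr (r.s_ne (i+1))
  have hcneg : c < 0 := by
    rw [hc]; apply neg_neg_of_pos; positivity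
  have hmem2 : x + c • r.s (i+1) ∈ Metric.ball x ε := by
    rw [Metric.mem_ball, dist_eq_norm]
    have : x + c • r.s (i+1) - x = c • r.s (i+1) := by ring
    rw [this, norm_smul]
    simp only [Real.norm_eq_abs, hc, abs_neg]
    rw [abs_of_pos (by positivity)]
    rw [div_mul_eq_mul_div]
    rw [div_lt_iff₀ (by positivity)]
    nlinarith
  have hreg : x + c • r.s (i+1) ∈ r.region := interior_subset (hball hmem2)
  have := (r.region_sub i hreg).2
  rw [r.cb_shift i x c, hcb] at this
  have := this.1
  linarith

end Rhombus

lemma im_div_add (a b e : ℂ) : ((a+b)/e).im = (a/e).im + (b/e).im := by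
  rw [add_div, Complex.add_im]

lemma im_div_smul (t : ℝ) (a e : ℂ) : (((t • a))/e).im = t * (a/e).im := by
  rw [Complex.real_smul, mul_div_assoc, Complex.mul_im]
  simp

namespace Rhombus

variable (r : Rhombus)

lemma im_decomp {e : ℂ} (i : ZMod 4) (x : ℂ) :
    (x/e).im = ((r.v i)/e).im + (r.ca i x)*((r.s i)/e).im + (r.cb i x)*((r.s (i+1))/e).im := by
  conv_lhs => rw [r.reprn i x]
  rw [im_div_add, im_div_add, im_div_smul, im_div_smul]

lemma im_v_add {e : ℂ} (i : ZMod 4) :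
    ((r.v (i+1))/e).im = ((r.v i)/e).im + ((r.s i)/e).im := by
  rw [r.v_one i, im_div_add]

lemma im_v_two {e : ℂ} (i : ZMod 4) :
    ((r.v (i+2))/e).im = ((r.v i)/e).im + ((r.s i)/e).im + ((r.s (i+1))/e).im := by
  rw [r.v_two i, im_div_add, im_div_add]

lemma im_v_three {e : ℂ} (i : ZMod 4) :
    ((r.v (i+3))/e).im = ((r.v i)/e).im + ((r.s (i+1))/e).im := by
  rw [r.v_three i, im_div_add]

lemma sigma_ne {e : ℂ} (he : e ≠ 0) (i : ZMod 4) (hpar : ((r.s i)/e).im = 0) :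
    ((r.s (i+1))/e).im ≠ 0 := by
  intro hq
  apply r.ratio_im i
  have hp : r.s i / e = ((r.s i / e).re : ℂ) := by
    apply Complex.ext <;> simp [hpar]
  have hq' : r.s (i+1) / e = ((r.s (i+1) / e).re : ℂ) := by
    apply Complex.ext <;> simp [hq]
  have hpne : r.s i / e ≠ 0 := div_ne_zero (r.s_ne i) he
  have hd : r.s (i+1) / r.s i = (r.s (i+1) / e) / (r.s i / e) := by
    field_simp
  rw [hd, hq', hp, ← Complex.ofReal_div]
  simp

/-- the midpoint of side `i` -/
lemma mid_eq (i : ZMod 4) :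
    (r.v i + r.v (i+1))/2 = r.v i + ((1:ℝ)/2) • r.s i + (0:ℝ) • r.s (i+1) := by
  rw [r.v_one i, Complex.real_smul, Complex.real_smul]
  push_cast
  ring

lemma im_mid {e : ℂ} (i : ZMod 4) (hpar : ((r.s i)/e).im = 0) :
    (((r.v i + r.v (i+1))/2)/e).im = ((r.v i)/e).im := by
  have h1 : (r.v i + r.v (i+1))/2 = ((1/2 : ℝ)) • (r.v i + r.v (i+1)) := by
    rw [Complex.real_smul]; push_cast; ring
  rw [h1, im_div_smul, im_div_add, r.im_v_add i, hpar]
  ring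

lemma half_disk {e : ℂ} (he : e ≠ 0) (i : ZMod 4) (hpar : ((r.s i)/e).im = 0) :
    ∃ δ > 0, ∀ x : ℂ, dist x ((r.v i + r.v (i+1))/2) < δ →
      0 < ((r.s (i+1))/e).im * ((x/e).im - ((r.v i)/e).im) → x ∈ interior r.region := by
  set m := (r.v i + r.v (i+1))/2 with hm
  have hcam : r.ca i m = 1/2 := by
    rw [hm, r.mid_eq i, (r.coords_spec i (1/2) 0).1]
  have hcbm : r.cb i m = 0 := by
    rw [hm, r.mid_eq i, (r.coords_spec i (1/2) 0).2]
  have hopen : IsOpen {x | r.ca i x ∈ Ioo (0:ℝ) 1 ∧ r.cb i x ∈ Ioo (-1:ℝ) 1} :=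
    IsOpen.inter (isOpen_Ioo.preimage (r.continuous_ca i)) (isOpen_Ioo.preimage (r.continuous_cb i))
  have hmem : m ∈ {x | r.ca i x ∈ Ioo (0:ℝ) 1 ∧ r.cb i x ∈ Ioo (-1:ℝ) 1} := by
    rw [Set.mem_setOf_eq, hcam, hcbm]
    constructor <;> constructor <;> norm_num
  rcases Metric.isOpen_iff.mp hopen m hmem with ⟨δ, hδ, hball⟩
  refine ⟨δ, hδ, fun x hx hpos => ?_⟩
  have hxball := hball (Metric.mem_ball.mpr hx)
  rw [Set.mem_setOf_eq] at hxball
  have hdec := r.im_decomp (e := e) i x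
  rw [hpar, mul_zero, add_zero] at hdec
  have hcbx : 0 < r.cb i x := by
    have h2 : (x/e).im - ((r.v i)/e).im = r.cb i x * ((r.s (i+1))/e).im := by
      rw [hdec]; ring
    rw [h2] at hpos
    nlinarith [sq_nonneg (((r.s (i+1))/e).im)]
  have := r.mem_interior i (a := r.ca i x) (b := r.cb i x) hxball.1 ⟨hcbx, hxball.2.2⟩
  rwa [← r.reprn i x] at this

end Rhombus

lemma sign_aux {a b s s' : ℝ} (ha0 : 0 ≤ a) (hb0 : 0 ≤ b) (hss : s * s' < 0)
    (hk : a * s = b * s') : a * s = 0 := by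
  rcases lt_trichotomy (a*s) 0 with hneg | hzero | hpos
  · exfalso
    have hs : s < 0 := by
      by_contra hcon; push_neg at hcon; nlinarith [mul_nonneg ha0 hcon]
    have hs' : s' < 0 := by
      by_contra hcon; push_neg at hcon; nlinarith [mul_nonneg hb0 hcon]
    nlinarith [mul_pos_of_neg_of_neg hs hs']
  · exact hzero
  · exfalso
    have hs : 0 < s := by
      by_contra hcon; push_neg at hcon
      nlinarith [mul_nonneg ha0 (neg_nonneg.mpr hcon)]
    have hs' : 0 < s' := by
      by_contra hcon; push_neg at hcon
      nlinarith [mul_nonneg hb0 (neg_nonneg.mpr hcon)]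
    nlinarith [mul_pos hs hs']

lemma sideEnds_cases {r r' : Rhombus} {i i' : ZMod 4} (h : r.sideEnds i = r'.sideEnds i') :
    (r'.v i' = r.v i ∧ r'.v (i'+1) = r.v (i+1)) ∨
    (r'.v i' = r.v (i+1) ∧ r'.v (i'+1) = r.v i) := by
  have h2 := h.symm
  rw [Rhombus.sideEnds, Rhombus.sideEnds, Set.pair_eq_pair_iff] at h2
  tauto

lemma sideEnds_s {r r' : Rhombus} {i i' : ZMod 4} (h : r.sideEnds i = r'.sideEnds i') :
    r'.s i' = r.s i ∨ r'.s i' = - r.s i := by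
  rcases sideEnds_cases h with ⟨h1, h2⟩ | ⟨h1, h2⟩
  · left; rw [Rhombus.s, Rhombus.s, h1, h2]
  · right; rw [Rhombus.s, Rhombus.s, h1, h2]; ring

lemma sideEnds_mid {r r' : Rhombus} {i i' : ZMod 4} (h : r.sideEnds i = r'.sideEnds i') :
    (r'.v i' + r'.v (i'+1))/2 = (r.v i + r.v (i+1))/2 := by
  rcases sideEnds_cases h with ⟨h1, h2⟩ | ⟨h1, h2⟩ <;> rw [h1, h2] <;> ring

lemma sideEnds_level {e : ℂ} {r r' : Rhombus} {i i' : ZMod 4}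
    (h : r.sideEnds i = r'.sideEnds i') (hpar : ((r.s i)/e).im = 0) :
    ((r'.v i')/e).im = ((r.v i)/e).im := by
  have hlev : ((r.v (i+1))/e).im = ((r.v i)/e).im := by
    rw [r.im_v_add i, hpar, add_zero]
  rcases sideEnds_cases h with ⟨h1, _⟩ | ⟨h1, _⟩ <;> rw [h1]
  exact hlev

lemma sideEnds_par {e : ℂ} {r r' : Rhombus} {i i' : ZMod 4}
    (h : r.sideEnds i = r'.sideEnds i') (hpar : ((r.s i)/e).im = 0) :
    ((r'.s i')/e).im = 0 := by
  rcases sideEnds_s h with h1 | h1 <;> rw [h1]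
  · exact hpar
  · rw [neg_div, Complex.neg_im, hpar, neg_zero]

/-- Separation: two distinct tiles sharing an edge lie on opposite sides. -/
lemma sep {T : RhombusTiling} {r r' : Rhombus} (hr : r ∈ T.rhombi) (hr' : r' ∈ T.rhombi)
    (hne : r ≠ r') {i i' : ZMod 4} (h : r.sideEnds i = r'.sideEnds i')
    {e : ℂ} (he : e ≠ 0) (hpar : ((r.s i)/e).im = 0) :
    ((r.s (i+1))/e).im * ((r'.s (i'+1))/e).im < 0 := by
  set σ := ((r.s (i+1))/e).im with hσ
  set σ' := ((r'.s (i'+1))/e).im with hσ'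
  have hpar' : ((r'.s i')/e).im = 0 := sideEnds_par h hpar
  have hσne : σ ≠ 0 := r.sigma_ne he i hpar
  have hσ'ne : σ' ≠ 0 := r'.sigma_ne he i' hpar'
  rcases lt_or_gt_of_ne (mul_ne_zero hσne hσ'ne) with hlt | hgt
  · exact hlt
  exfalso
  rcases r.half_disk he i hpar with ⟨δ, hδ, hdisk⟩
  rcases r'.half_disk he i' hpar' with ⟨δ', hδ', hdisk'⟩
  set m := (r.v i + r.v (i+1))/2 with hm
  have hm' : (r'.v i' + r'.v (i'+1))/2 = m := sideEnds_mid h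
  have hlev : ((r'.v i')/e).im = ((r.v i)/e).im := sideEnds_level h hpar
  set η : ℝ := min δ δ' / (2 * (|σ| * ‖e‖ + 1)) with hη
  have hηpos : 0 < η := by
    apply div_pos (lt_min hδ hδ')
    positivity
  set x := m + (σ * η) • (Complex.I * e) with hx
  have him : (x/e).im = ((r.v i)/e).im + σ * η := by
    rw [hx, im_div_add, im_div_smul, r.im_mid i hpar]
    rw [mul_div_cancel_right₀ Complex.I he]
    simp
  have hdist : dist x m < min δ δ' := by
    rw [hx, dist_eq_norm]
    have h1 : m + (σ * η) • (Complex.I * e) - m = (σ * η) • (Complex.I * e) := by ring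
    rw [h1, norm_smul]
    simp only [Real.norm_eq_abs, norm_mul, Complex.norm_I, one_mul]
    rw [abs_of_pos hηpos]
    calc |σ| * η * ‖e‖ ≤ η * (|σ| * ‖e‖ + 1) := by nlinarith [abs_nonneg σ, norm_nonneg e, hηpos]
    _ = min δ δ' / 2 := by rw [hη]; field_simp
    _ < min δ δ' := half_lt_self (lt_min hδ hδ')
  have hx1 : x ∈ interior r.region := by
    apply hdisk x (lt_of_lt_of_le hdist (min_le_left _ _))
    rw [him]
    have : ((r.v i)/e).im + σ * η - ((r.v i)/e).im = σ * η := by ring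
    rw [this]
    have : σ * (σ * η) = σ^2 * η := by ring
    rw [this]
    positivity
  have hx2 : x ∈ interior r'.region := by
    apply hdisk' x
    · rw [hm']; exact lt_of_lt_of_le hdist (min_le_right _ _)
    · rw [him, hlev]
      have h3 : ((r.v i)/e).im + σ * η - ((r.v i)/e).im = σ * η := by ring
      rw [h3]
      have h4 : σ' * (σ * η) = (σ * σ') * η := by ring
      rw [h4]
      positivity
  have := T.int_disjoint r hr r' hr' hne
  rw [Set.eq_empty_iff_forall_notMem] at this
  exact this x ⟨hx1, hx2⟩

lemma Rhombus.sideEnds_inj (r : Rhombus) {a b : ZMod 4} (h : r.sideEnds a = r.sideEnds b) :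
    b = a := by
  obtain ⟨m, rfl⟩ : ∃ m, b = a + m := ⟨b - a, by ring⟩
  rcases zmod4_cases m with hm | hm | hm | hm <;> subst hm
  · ring
  · exfalso
    rcases sideEnds_cases h with ⟨h1, h2⟩ | ⟨h1, h2⟩
    · -- v(a+1) = v a
      apply r.s_ne a
      rw [Rhombus.s, h1, sub_self]
    · -- v(a+1) = v(a+1) ∧ v(a+2) = v a
      rw [show a+1+1 = a+2 by ring] at h2
      exact r.v_ne a h2.symm
  · exfalso
    rcases sideEnds_cases h with ⟨h1, h2⟩ | ⟨h1, h2⟩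
    · exact r.v_ne a h1.symm
    · -- v(a+2) = v(a+1)
      apply r.s_ne (a+1)
      rw [show a+2+1 = a+3 by ring] at h2
      rw [Rhombus.s, show a+1+1 = a+2 by ring, h1, sub_self]
  · exfalso
    rcases sideEnds_cases h with ⟨h1, h2⟩ | ⟨h1, h2⟩
    · -- v(a+3) = v a ∧ v(a+3+1) = v (a+1)
      apply r.s_ne (a+3)
      have h4 : a+3+1 = a := by
        rw [add_assoc, show (3:ZMod 4)+1 = 0 by decide, add_zero]
      rw [Rhombus.s, h4, ← h1, sub_self]
    · -- v(a+3) = v(a+1)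
      exact r.v_ne (a+1) (by rw [show a+1+2 = a+3 by ring]; exact h1.symm)

/-- two distinct tiles share at most one edge -/
lemma shared_edge_unique {T : RhombusTiling} {r r' : Rhombus}
    (hr : r ∈ T.rhombi) (hr' : r' ∈ T.rhombi) (hne : r ≠ r') {i i' j j' : ZMod 4}
    (h1 : r.sideEnds i = r'.sideEnds i') (h2 : r.sideEnds j = r'.sideEnds j') :
    j = i := by
  set e := r.s i with he'
  have he : e ≠ 0 := r.s_ne i
  have hpar : ((r.s i)/e).im = 0 := by rw [← he', div_self he]; simp
  have hsep := sep hr hr' hne h1 he hpar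
  set σ := ((r.s (i+1))/e).im with hσ
  set σ' := ((r'.s (i'+1))/e).im with hσ'
  set c := ((r.v i)/e).im with hc
  have hpar' : ((r'.s i')/e).im = 0 := sideEnds_par h1 hpar
  have hlev' : ((r'.v i')/e).im = c := sideEnds_level h1 hpar
  -- every endpoint of the second shared edge has level c
  have hlevel : ∀ x : ℂ, x ∈ r.region → x ∈ r'.region → (x/e).im = c := by
    intro x hx hx'
    have d1 := r.im_decomp (e := e) i x
    rw [hpar, mul_zero, add_zero] at d1
    have d2 := r'.im_decomp (e := e) i' x
    rw [hpar', mul_zero, add_zero, hlev'] at d2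
    have m1 := (r.region_sub i hx).2
    have m2 := (r'.region_sub i' hx').2
    have key : r.cb i x * σ = r'.cb i' x * σ' := by
      rw [← hc] at d1
      linarith [d1, d2]
    have hz := sign_aux m1.1 m2.1 hsep key
    rw [← hc] at d1
    rw [← hσ] at d1
    linarith [d1, hz]
  have hvmem : ∀ k : ZMod 4, r.v k ∈ r.region := fun k => subset_convexHull ℝ _ ⟨k, rfl⟩
  have hvmem' : ∀ k : ZMod 4, r'.v k ∈ r'.region := fun k => subset_convexHull ℝ _ ⟨k, rfl⟩
  have hj1 : (r.v j / e).im = c := by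
    apply hlevel _ (hvmem j)
    have : r.v j ∈ r.sideEnds j := by left; rfl
    rw [h2] at this
    rcases this with h' | h'
    · rw [h']; exact hvmem' j'
    · rw [Set.mem_singleton_iff] at h'; rw [h']; exact hvmem' (j'+1)
  have hj2 : (r.v (j+1) / e).im = c := by
    apply hlevel _ (hvmem (j+1))
    have : r.v (j+1) ∈ r.sideEnds j := by right; rfl
    rw [h2] at this
    rcases this with h' | h'
    · rw [h']; exact hvmem' j'
    · rw [Set.mem_singleton_iff] at h'; rw [h']; exact hvmem' (j'+1)
  have hσne : σ ≠ 0 := r.sigma_ne he i hpar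
  -- levels of the vertices of r
  have lev0 : ((r.v i)/e).im = c := rfl
  have lev1 : ((r.v (i+1))/e).im = c := by rw [r.im_v_add i, hpar, add_zero]
  have lev2 : ((r.v (i+2))/e).im = c + σ := by rw [r.im_v_two i, hpar]; ring
  have lev3 : ((r.v (i+3))/e).im = c + σ := by rw [r.im_v_three i]
  obtain ⟨m, rfl⟩ : ∃ m, j = i + m := ⟨j - i, by ring⟩
  rcases zmod4_cases m with hm | hm | hm | hm <;> subst hm
  · ring
  · exfalso
    rw [show i+1+1 = i+2 by ring] at hj2
    rw [lev2] at hj2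
    exact hσne (by linarith)
  · exfalso
    rw [lev2] at hj1
    exact hσne (by linarith)
  · exfalso
    rw [lev3] at hj1
    exact hσne (by linarith)

/-- at most one tile on the other side of a given edge -/
lemma neighbor_unique {T : RhombusTiling} {r r1 r2 : Rhombus}
    (hr : r ∈ T.rhombi) (h1 : r1 ∈ T.rhombi) (h2 : r2 ∈ T.rhombi)
    (hne1 : r1 ≠ r) (hne2 : r2 ≠ r) {i i1 i2 : ZMod 4}
    (e1 : r.sideEnds i = r1.sideEnds i1) (e2 : r.sideEnds i = r2.sideEnds i2) :
    r1 = r2 := by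
  by_contra hne
  set e := r.s i with he'
  have he : e ≠ 0 := r.s_ne i
  have hpar : ((r.s i)/e).im = 0 := by rw [← he', div_self he]; simp
  have hs1 := sep hr h1 (Ne.symm hne1) e1 he hpar
  have hs2 := sep hr h2 (Ne.symm hne2) e2 he hpar
  have hpar1 : ((r1.s i1)/e).im = 0 := sideEnds_par e1 hpar
  have e12 : r1.sideEnds i1 = r2.sideEnds i2 := e1.symm.trans e2
  have hs12 := sep h1 h2 hne e12 he hpar1
  nlinarith [mul_pos_of_neg_of_neg hs1 hs2, hs12,
    sq_nonneg (((r.s (i+1))/e).im), sq_nonneg (((r1.s (i1+1))/e).im * ((r2.s (i2+1))/e).im)]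

lemma Rhombus.center_base (r : Rhombus) (i : ZMod 4) :
    r.center = (r.v i + r.v (i+2))/2 := by
  rcases zmod4_cases i with hi | hi | hi | hi <;> subst hi <;> rw [Rhombus.center]
  · rfl
  · rw [show (1:ZMod 4)+2 = 3 by decide]
    rw [r.para]
  · rw [show (2:ZMod 4)+2 = 0 by decide]
    ring
  · rw [show (3:ZMod 4)+2 = 1 by decide]
    rw [r.para]
    ring

/-- Track data: a train track together with a choice of entrance side indices. -/
structure TD (T : RhombusTiling) where
  t : TrainTrack T
  it : ℤ → ZMod 4
  prev_ne : ∀ n : ℤ, t.seq n ≠ t.seq (n - 1)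
  next_ne : ∀ n : ℤ, t.seq n ≠ t.seq (n + 1)
  prev_edge : ∀ n : ℤ, ∃ j, (t.seq n).sideEnds (it n) = (t.seq (n-1)).sideEnds j
  next_edge : ∀ n : ℤ, ∃ j, (t.seq n).sideEnds (it n + 2) = (t.seq (n+1)).sideEnds j

lemma TrainTrack.exists_td {T : RhombusTiling} (t : TrainTrack T) : ∃ d : TD T, d.t = t := by
  choose i h1 h2 using t.straight
  exact ⟨⟨t, i, fun n => (h1 n).1, fun n => (h2 n).1, fun n => (h1 n).2, fun n => (h2 n).2⟩, rfl⟩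

namespace TD

variable {T : RhombusTiling} (d : TD T)

def sv (n : ℤ) : ℂ := (d.t.seq n).s (d.it n)
def cv (n : ℤ) : ℂ := (d.t.seq n).s (d.it n + 1)
def mu (n : ℤ) : ℂ := ((d.t.seq n).v (d.it n) + (d.t.seq n).v (d.it n + 1))/2
def e0 : ℂ := d.sv 0
def eps : ℝ := if 0 < ((d.cv 0)/(d.e0)).im then 1 else -1
def F (x : ℂ) : ℝ := d.eps * ((x / d.e0).im)

lemma e0_ne : d.e0 ≠ 0 := (d.t.seq 0).s_ne (d.it 0)

lemma match_edge (n : ℤ) :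
    (d.t.seq (n+1)).sideEnds (d.it (n+1)) = (d.t.seq n).sideEnds (d.it n + 2) := by
  obtain ⟨j, hj⟩ := d.next_edge n
  obtain ⟨j', hj'⟩ := d.prev_edge (n+1)
  rw [show n+1-1 = n by ring] at hj'
  have hne : d.t.seq (n+1) ≠ d.t.seq n := Ne.symm (d.next_ne n)
  have hju := shared_edge_unique (d.t.mem (n+1)) (d.t.mem n) hne hj' hj.symm
  rw [hju] at hj
  exact hj.symm

lemma sv_pm (n : ℤ) : d.sv (n+1) = d.sv n ∨ d.sv (n+1) = - d.sv n := by
  have h := sideEnds_s (d.match_edge n)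
  -- h : (seq n).s (it n + 2) = ± (seq (n+1)).s (it (n+1))
  have h2 := (d.t.seq n).s_two (d.it n)
  rcases h with h | h
  · right
    rw [sv, sv, ← h, h2]
  · left
    rw [sv, sv]
    rw [h2] at h
    linear_combination h

lemma mu_step (n : ℤ) : d.mu (n+1) = d.mu n + d.cv n := by
  have h := sideEnds_mid (d.match_edge n)
  rw [mu, mu, cv, ← h, show d.it n + 2 + 1 = d.it n + 3 by ring,
    (d.t.seq n).v_two (d.it n), (d.t.seq n).v_three (d.it n), (d.t.seq n).v_one (d.it n)]
  ring

lemma sv_par : ∀ n : ℤ, ∃ c : ℝ, c ≠ 0 ∧ d.sv n = c • d.e0 := by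
  intro n
  induction n using Int.induction_on with
  | zero => exact ⟨1, one_ne_zero, by rw [e0, one_smul]⟩
  | succ k ih =>
    obtain ⟨c, hc, hsv⟩ := ih
    rcases d.sv_pm k with h | h
    · exact ⟨c, hc, by rw [h, hsv]⟩
    · exact ⟨-c, neg_ne_zero.mpr hc, by rw [h, hsv, neg_smul]⟩
  | pred k ih =>
    obtain ⟨c, hc, hsv⟩ := ih
    rcases d.sv_pm (-(k:ℤ)-1) with h | h
    · rw [show -(k:ℤ)-1+1 = -k by ring] at h
      exact ⟨c, hc, by rw [← h, hsv]⟩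
    · rw [show -(k:ℤ)-1+1 = -k by ring] at h
      refine ⟨-c, neg_ne_zero.mpr hc, ?_⟩
      rw [neg_smul, ← hsv]
      linear_combination h
lemma sv_im0 (n : ℤ) : ((d.sv n)/d.e0).im = 0 := by
  obtain ⟨c, _, hsv⟩ := d.sv_par n
  rw [hsv, im_div_smul, div_self d.e0_ne]
  simp

lemma cv_im_ne (n : ℤ) : ((d.cv n)/d.e0).im ≠ 0 :=
  (d.t.seq n).sigma_ne d.e0_ne (d.it n) (d.sv_im0 n)

lemma F_step (n : ℤ) : 0 < ((d.cv n)/d.e0).im * ((d.cv (n+1))/d.e0).im := by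
  have hpar : (((d.t.seq n).s (d.it n + 2))/d.e0).im = 0 := by
    rw [(d.t.seq n).s_two (d.it n), neg_div, Complex.neg_im]
    have h0 := d.sv_im0 n
    rw [sv] at h0
    rw [h0, neg_zero]
  have hsep := sep (d.t.mem n) (d.t.mem (n+1)) (d.next_ne n) (d.match_edge n).symm d.e0_ne hpar
  have h3 : (d.t.seq n).s (d.it n + 2 + 1) = - (d.t.seq n).s (d.it n + 1) := by
    rw [show d.it n + 2 + 1 = (d.it n + 1) + 2 by ring, (d.t.seq n).s_two (d.it n + 1)]
  rw [h3] at hsep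
  rw [neg_div, Complex.neg_im] at hsep
  rw [cv, cv]
  nlinarith [hsep]

lemma F_pos : ∀ n : ℤ, 0 < d.F (d.cv n) := by
  have base : 0 < d.F (d.cv 0) := by
    rw [F, eps]
    split_ifs with h
    · rw [one_mul]; exact h
    · push_neg at h
      have := d.cv_im_ne 0
      have hlt : ((d.cv 0)/d.e0).im < 0 := lt_of_le_of_ne h this
      nlinarith
  have heps2 : d.eps^2 = 1 := by
    rw [eps]; split_ifs <;> norm_num
  have step : ∀ n : ℤ, (0 < d.F (d.cv n) ↔ 0 < d.F (d.cv (n+1))) := by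
    intro n
    have h := d.F_step n
    have hpp : 0 < (d.eps * ((d.cv n)/d.e0).im) * (d.eps * ((d.cv (n+1))/d.e0).im) := by
      have heq : (d.eps * ((d.cv n)/d.e0).im) * (d.eps * ((d.cv (n+1))/d.e0).im)
          = d.eps^2 * (((d.cv n)/d.e0).im * ((d.cv (n+1))/d.e0).im) := by ring
      rw [heq, heps2, one_mul]
      exact h
    constructor <;> intro h1 <;> rw [F] at * <;> nlinarith [hpp, h1]
  intro n
  induction n using Int.induction_on with
  | zero => exact base
  | succ k ih => exact (step k).mp ih
  | pred k ih =>
    apply (step (-(k:ℤ)-1)).mpr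
    rw [show -(k:ℤ)-1+1 = -k by ring]
    exact ih

lemma center_eq (n : ℤ) : (d.t.seq n).center = d.mu n + d.cv n / 2 := by
  rw [(d.t.seq n).center_base (d.it n), (d.t.seq n).v_two (d.it n), mu, cv,
    (d.t.seq n).v_one (d.it n)]
  ring

lemma F_add (x y : ℂ) : d.F (x + y) = d.F x + d.F y := by
  rw [F, F, F, im_div_add]; ring

lemma F_half (x : ℂ) : d.F (x/2) = d.F x / 2 := by
  have : x/2 = (1/2 : ℝ) • x := by rw [Complex.real_smul]; push_cast; ring
  rw [this, F, F, im_div_smul]; ring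

lemma Fc_mono : StrictMono (fun n : ℤ => d.F ((d.t.seq n).center)) := by
  apply strictMono_int_of_lt_succ
  intro n
  rw [d.center_eq n, d.center_eq (n+1), d.mu_step n, d.F_add, d.F_add, d.F_add, d.F_half,
    d.F_half]
  have h1 := d.F_pos n
  have h2 := d.F_pos (n+1)
  linarith

lemma seq_inj : Function.Injective d.t.seq := by
  intro a b h
  have : d.F ((d.t.seq a).center) = d.F ((d.t.seq b).center) := by rw [h]
  exact d.Fc_mono.injective this

end TD

theorem part_one {T : RhombusTiling} (t : TrainTrack T) : Function.Injective t.seq := by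
  obtain ⟨d, rfl⟩ := t.exists_td
  exact d.seq_inj

namespace TD

variable {T : RhombusTiling} (d : TD T)

lemma step_edges (n dd : ℤ) (hd : dd = 1 ∨ dd = -1) : ∃ b : ZMod 4,
    (d.t.seq n ≠ d.t.seq (n - dd)) ∧ (d.t.seq n ≠ d.t.seq (n + dd)) ∧
    (∃ j, (d.t.seq n).sideEnds b = (d.t.seq (n-dd)).sideEnds j) ∧
    (∃ j, (d.t.seq n).sideEnds (b+2) = (d.t.seq (n+dd)).sideEnds j) := by
  rcases hd with rfl | rfl
  · exact ⟨d.it n, d.prev_ne n, d.next_ne n, d.prev_edge n, d.next_edge n⟩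
  · refine ⟨d.it n + 2, ?_, ?_, ?_, ?_⟩
    · rw [show n - (-1 : ℤ) = n + 1 by ring]; exact d.next_ne n
    · rw [show n + (-1 : ℤ) = n - 1 by ring]; exact d.prev_ne n
    · rw [show n - (-1 : ℤ) = n + 1 by ring]; exact d.next_edge n
    · rw [show n + (-1 : ℤ) = n - 1 by ring]
      have h4 : d.it n + 2 + 2 = d.it n := by
        rw [add_assoc, show (2:ZMod 4)+2 = 0 by decide, add_zero]
      rw [h4]
      exact d.prev_edge n

lemma det (d' : TD T) {n n' dd ee : ℤ} (hd : dd = 1 ∨ dd = -1) (he : ee = 1 ∨ ee = -1)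
    (h0 : d.t.seq n = d'.t.seq n') (h1 : d.t.seq (n - dd) = d'.t.seq (n' - ee)) :
    d.t.seq (n + dd) = d'.t.seq (n' + ee) := by
  obtain ⟨b, hne1, hne2, ⟨j, hbj⟩, ⟨l, hbl⟩⟩ := d.step_edges n dd hd
  obtain ⟨b', hne1', hne2', ⟨j', hbj'⟩, ⟨l', hbl'⟩⟩ := d'.step_edges n' ee he
  rw [← h0] at hbj' hbl' hne1' hne2'
  rw [← h1] at hbj' hne1'
  -- hbj : (seq n).sideEnds b = (seq (n-dd)).sideEnds j
  -- hbj' : (seq n).sideEnds b' = (seq (n-dd)).sideEnds j'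
  have hbb : b' = b :=
    shared_edge_unique (d.t.mem n) (by rw [h1]; exact d'.t.mem (n' - ee)) hne1 hbj hbj'
  rw [hbb] at hbl'
  exact neighbor_unique (d.t.mem n) (d.t.mem (n+dd)) (d'.t.mem (n' + ee))
    (Ne.symm hne2) (Ne.symm hne2') hbl hbl'

lemma merge (d' : TD T) {a b ee : ℤ} (he : ee = 1 ∨ ee = -1)
    (h0 : d.t.seq a = d'.t.seq b) (h1 : d.t.seq (a+1) = d'.t.seq (b+ee)) :
    ∀ k : ℤ, d.t.seq (a+k) = d'.t.seq (b+ee*k) := by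
  have key : ∀ k : ℤ, d.t.seq (a+k) = d'.t.seq (b+ee*k) ∧
      d.t.seq (a+k+1) = d'.t.seq (b+ee*(k+1)) := by
    intro k
    induction k using Int.induction_on with
    | zero =>
      constructor
      · rw [show a + 0 = a by ring, show b + ee*0 = b by ring]; exact h0
      · rw [show a + 0 + 1 = a + 1 by ring, show b + ee*(0+1) = b + ee by ring]; exact h1
    | succ k ih =>
      constructor
      · rw [show a + ((k:ℤ)+1) = a + k + 1 by ring, show b + ee*((k:ℤ)+1) = b + ee*(k+1) by ring]
        exact ih.2
      · have hdet := d.det d' (n := a+k+1) (n' := b+ee*(k+1)) (dd := 1) (ee := ee)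
          (Or.inl rfl) he ih.2 ?_
        · rw [show a + ((k:ℤ)+1) + 1 = a + k + 1 + 1 by ring,
            show b + ee*(((k:ℤ)+1)+1) = b + ee*(k+1) + ee by ring]
          exact hdet
        · rw [show a + (k:ℤ) + 1 - 1 = a + k by ring, show b + ee*((k:ℤ)+1) - ee = b + ee*k by ring]
          exact ih.1
    | pred k ih =>
      constructor
      · have hdet := d.det d' (n := a + (-(k:ℤ))) (n' := b + ee*(-(k:ℤ))) (dd := -1) (ee := -ee)
          (Or.inr rfl)
          (by rcases he with rfl | rfl
              · right; norm_num
              · left; norm_num)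
          ih.1 ?_
        · rw [show a + (-(k:ℤ)-1) = a + (-(k:ℤ)) + -1 by ring,
            show b + ee*(-(k:ℤ)-1) = b + ee*(-(k:ℤ)) + -ee by ring]
          exact hdet
        · rw [show a + (-(k:ℤ)) - -1 = a + (-(k:ℤ)) + 1 by ring,
            show b + ee*(-(k:ℤ)) - -ee = b + ee*(-(k:ℤ)+1) by ring]
          exact ih.2
      · rw [show a + (-(k:ℤ)-1) + 1 = a + (-(k:ℤ)) by ring,
          show b + ee*(-(k:ℤ)-1+1) = b + ee*(-(k:ℤ)) by ring]
        exact ih.1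
  exact fun k => (key k).1

lemma range_eq (d' : TD T) {a b ee : ℤ} (he : ee = 1 ∨ ee = -1)
    (h0 : d.t.seq a = d'.t.seq b) (h1 : d.t.seq (a+1) = d'.t.seq (b+ee)) :
    Set.range d.t.seq = Set.range d'.t.seq := by
  have key := d.merge d' he h0 h1
  have he2 : ee * ee = 1 := by rcases he with rfl | rfl <;> norm_num
  ext x
  constructor
  · rintro ⟨m, rfl⟩
    refine ⟨b + ee*(m - a), ?_⟩
    rw [← key (m - a)]
    congr 1
    ring
  · rintro ⟨m, rfl⟩
    refine ⟨a + ee*(m - b), ?_⟩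
    rw [key (ee*(m - b))]
    congr 1
    linear_combination (m - b) * he2

lemma same_pair_range (d' : TD T) {a b : ℤ} (h0 : d.t.seq a = d'.t.seq b)
    (hp : d'.it b = d.it a ∨ d'.it b = d.it a + 2) :
    Set.range d.t.seq = Set.range d'.t.seq := by
  obtain ⟨j, hj⟩ := d.next_edge a
  rw [h0] at hj
  rcases hp with hp | hp
  · obtain ⟨j', hj'⟩ := d'.next_edge b
    rw [hp] at hj'
    have hstep : d.t.seq (a+1) = d'.t.seq (b+1) := by
      refine neighbor_unique (d'.t.mem b) (d.t.mem (a+1)) (d'.t.mem (b+1)) ?_ ?_ hj hj'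
      · rw [← h0]; exact Ne.symm (d.next_ne a)
      · exact Ne.symm (d'.next_ne b)
    exact d.range_eq d' (Or.inl rfl) h0 hstep
  · obtain ⟨j', hj'⟩ := d'.prev_edge b
    rw [hp] at hj'
    have hstep : d.t.seq (a+1) = d'.t.seq (b-1) := by
      refine neighbor_unique (d'.t.mem b) (d.t.mem (a+1)) (d'.t.mem (b-1)) ?_ ?_ hj hj'
      · rw [← h0]; exact Ne.symm (d.next_ne a)
      · exact Ne.symm (d'.prev_ne b)
    refine d.range_eq d' (Or.inr rfl) h0 ?_
    rw [show b + (-1:ℤ) = b - 1 by ring]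
    exact hstep

end TD

def pwPath (μ s : ℤ → ℂ) (τ : ℝ) : ℂ := μ ⌊τ⌋ + (τ - ⌊τ⌋) • s ⌊τ⌋

lemma pwPath_int (μ s : ℤ → ℂ) (n : ℤ) : pwPath μ s n = μ n := by
  simp [pwPath, Int.floor_intCast]

lemma pwPath_eq_on (μ s : ℤ → ℂ) (n : ℤ) (τ : ℝ) (h1 : (n:ℝ) ≤ τ) (h2 : τ < n+1) :
    pwPath μ s τ = μ n + (τ - n) • s n := by
  have : ⌊τ⌋ = n := by
    rw [Int.floor_eq_iff]
    constructor <;> [exact h1; exact_mod_cast h2]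
  rw [pwPath, this]

lemma pwPath_cont (μ s : ℤ → ℂ) (h : ∀ n, μ (n+1) = μ n + s n) :
    Continuous (pwPath μ s) := by
  rw [continuous_iff_continuousAt]
  intro τ0
  by_cases hint : ∃ n : ℤ, τ0 = (n:ℝ)
  · obtain ⟨n, rfl⟩ := hint
    rw [continuousAt_iff_continuous_left_right]
    constructor
    · -- from the left
      have hA : Continuous (fun τ : ℝ => μ (n-1) + (τ - ((n:ℝ)-1)) • s (n-1)) := by
        apply Continuous.add continuous_const
        exact (continuous_id.sub continuous_const).smul continuous_const
      have hAn : μ (n-1) + (((n:ℝ)) - ((n:ℝ)-1)) • s (n-1) = μ n := by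
        have h2 : ((n:ℝ) - ((n:ℝ)-1)) = 1 := by ring
        rw [h2, one_smul]
        rw [show n = (n-1)+1 by ring, h (n-1)]
        ring_nf
      have key : ContinuousWithinAt (pwPath μ s) (Ioc ((n:ℝ)-1) n) n := by
        apply ContinuousWithinAt.congr (hA.continuousWithinAt)
        · intro y hy
          rcases eq_or_lt_of_le hy.2 with hy2 | hy2
          · subst hy2
            rw [pwPath_int]
            rw [← hAn]
          · have : ((n:ℝ)-1) = ((n-1 : ℤ) : ℝ) := by push_cast; ring
            rw [pwPath_eq_on μ s (n-1) y (by rw [← this]; exact le_of_lt hy.1)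
              (by push_cast; linarith [hy2])]
            push_cast
            ring_nf
        · rw [pwPath_int, ← hAn]
      rw [ContinuousWithinAt] at key ⊢
      rwa [← nhdsWithin_Ioc_eq_nhdsLE (by linarith : (n:ℝ)-1 < n)]
    · -- from the right
      have hA : Continuous (fun τ : ℝ => μ n + (τ - (n:ℝ)) • s n) := by
        apply Continuous.add continuous_const
        exact (continuous_id.sub continuous_const).smul continuous_const
      have key : ContinuousWithinAt (pwPath μ s) (Ico ((n:ℝ)) (n+1)) n := by
        apply ContinuousWithinAt.congr (hA.continuousWithinAt)
        · intro y hy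
          rw [pwPath_eq_on μ s n y hy.1 (by push_cast; linarith [hy.2])]
        · rw [pwPath_int]
          simp
      rw [ContinuousWithinAt] at key ⊢
      rwa [← nhdsWithin_Ico_eq_nhdsGE (by linarith : (n:ℝ) < n+1)]
  · push_neg at hint
    set n := ⌊τ0⌋ with hn
    have h1 : (n:ℝ) < τ0 := lt_of_le_of_ne (Int.floor_le τ0) (fun hc => hint n hc.symm)
    have h2 : τ0 < (n:ℝ)+1 := by
      have := Int.lt_floor_add_one τ0
      push_cast at this ⊢
      linarith
    have hA : Continuous (fun τ : ℝ => μ n + (τ - (n:ℝ)) • s n) := by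
      apply Continuous.add continuous_const
      exact (continuous_id.sub continuous_const).smul continuous_const
    apply ContinuousAt.congr hA.continuousAt
    have hoo : Ioo ((n:ℝ)) ((n:ℝ)+1) ∈ nhds τ0 := isOpen_Ioo.mem_nhds ⟨h1, h2⟩
    apply Filter.eventuallyEq_of_mem hoo
    intro y hy
    rw [pwPath_eq_on μ s n y (le_of_lt hy.1) hy.2]

lemma pwPath_mono (μ s : ℤ → ℂ) (F : ℂ → ℝ) (Fadd : ∀ x y, F (x+y) = F x + F y)
    (Fsmul : ∀ (t : ℝ) (x : ℂ), F (t • x) = t * F x)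
    (h : ∀ n, μ (n+1) = μ n + s n) (hpos : ∀ n, 0 < F (s n)) :
    StrictMono (fun τ => F (pwPath μ s τ)) := by
  have hmono : Monotone (fun n : ℤ => F (μ n)) := by
    apply monotone_int_of_le_succ
    intro n
    rw [h n, Fadd]
    linarith [hpos n]
  have hfv : ∀ τ : ℝ, F (pwPath μ s τ) = F (μ ⌊τ⌋) + (τ - ⌊τ⌋) * F (s ⌊τ⌋) := by
    intro τ
    rw [pwPath, Fadd, Fsmul]
  intro τ τ' hlt
  simp only
  rcases eq_or_lt_of_le (Int.floor_mono hlt.le) with heq | hflt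
  · rw [hfv, hfv, ← heq]
    have := hpos ⌊τ⌋
    nlinarith [hlt]
  · have c1 : F (pwPath μ s τ) < F (μ (⌊τ⌋ + 1)) := by
      rw [hfv, h ⌊τ⌋, Fadd]
      have hfr : τ - ⌊τ⌋ < 1 := by linarith [Int.lt_floor_add_one τ]
      nlinarith [hpos ⌊τ⌋]
    have c2 : F (μ (⌊τ⌋ + 1)) ≤ F (μ ⌊τ'⌋) := hmono (by omega)
    have c3 : F (μ ⌊τ'⌋) ≤ F (pwPath μ s τ') := by
      rw [hfv]
      nlinarith [Int.floor_le τ', hpos ⌊τ'⌋]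
    linarith

namespace TD

variable {T : RhombusTiling} (d : TD T)

def P (τ : ℝ) : ℂ := pwPath d.mu d.cv τ

lemma F_smul (t : ℝ) (x : ℂ) : d.F (t • x) = t * d.F x := by
  rw [F, F, im_div_smul]; ring

lemma P_cont : Continuous d.P := pwPath_cont _ _ d.mu_step

lemma FP_mono : StrictMono (fun τ => d.F (d.P τ)) :=
  pwPath_mono _ _ d.F d.F_add d.F_smul d.mu_step d.F_pos

lemma P_half (n : ℤ) : d.P ((n:ℝ) + 1/2) = (d.t.seq n).center := by
  rw [P, pwPath_eq_on d.mu d.cv n ((n:ℝ)+1/2) (by linarith) (by linarith),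
    d.center_eq n]
  have : ((n:ℝ) + 1/2 - n) = (1/2 : ℝ) := by ring
  rw [this, Complex.real_smul]
  push_cast
  ring

end TD

lemma normsq_eq (w : ℂ) : ‖w‖^2 = w.re^2 + w.im^2 := by
  rw [Complex.sq_norm, Complex.normSq_apply]; ring

namespace TD

variable {T : RhombusTiling} (d : TD T)

lemma norm_e0 : ‖d.e0‖ = 2 := by
  rw [e0, sv, (d.t.seq 0).norm_s, T.side_two _ (d.t.mem 0)]

lemma norm_cv (n : ℤ) : ‖d.cv n‖ = 2 := by
  rw [cv, (d.t.seq n).norm_s, T.side_two _ (d.t.mem n)]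

lemma norm_sv (n : ℤ) : ‖d.sv n‖ = 2 := by
  rw [sv, (d.t.seq n).norm_s, T.side_two _ (d.t.mem n)]

lemma sv_par' (n : ℤ) : d.sv n = d.e0 ∨ d.sv n = - d.e0 := by
  obtain ⟨c, hc0, hcev⟩ := d.sv_par n
  have hnorm : ‖d.sv n‖ = |c| * ‖d.e0‖ := by rw [hcev, norm_smul, Real.norm_eq_abs]
  rw [d.norm_sv n, d.norm_e0] at hnorm
  have habs : |c| = 1 := by linarith
  rcases abs_eq (by norm_num : (0:ℝ) ≤ 1) |>.mp habs with hc | hc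
  · left; rw [hcev, hc, one_smul]
  · right; rw [hcev, hc, neg_smul, one_smul]

lemma diag_decomp (n : ℤ) : ∃ α β : ℝ, (α = 1 ∨ α = -1) ∧ (β = 1 ∨ β = -1) ∧
    (d.t.seq n).v 2 - (d.t.seq n).v 0 = α • d.sv n + β • d.cv n := by
  set r := d.t.seq n with hr
  have hv2 : r.v 2 = r.v 0 + r.s 0 + r.s 1 := by
    have := r.v_two 0
    rwa [show (0:ZMod 4)+2 = 2 by decide, show (0:ZMod 4)+1 = 1 by decide] at this
  have hs2 : r.s 2 = - r.s 0 := by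
    have := r.s_two 0
    rwa [show (0:ZMod 4)+2 = 2 by decide] at this
  have hs3 : r.s 3 = - r.s 1 := by
    have := r.s_two 1
    rwa [show (1:ZMod 4)+2 = 3 by decide] at this
  rcases zmod4_cases (d.it n) with hit | hit | hit | hit
  · refine ⟨1, 1, Or.inl rfl, Or.inl rfl, ?_⟩
    rw [sv, cv, ← hr, hit, show (0:ZMod 4)+1 = 1 by decide, hv2,
      Complex.real_smul, Complex.real_smul]
    push_cast; ring
  · refine ⟨1, -1, Or.inl rfl, Or.inr rfl, ?_⟩
    rw [sv, cv, ← hr, hit, show (1:ZMod 4)+1 = 2 by decide, hs2, hv2,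
      Complex.real_smul, Complex.real_smul]
    push_cast; ring
  · refine ⟨-1, -1, Or.inr rfl, Or.inr rfl, ?_⟩
    rw [sv, cv, ← hr, hit, show (2:ZMod 4)+1 = 3 by decide, hs2, hs3, hv2,
      Complex.real_smul, Complex.real_smul]
    push_cast; ring
  · refine ⟨-1, 1, Or.inr rfl, Or.inl rfl, ?_⟩
    rw [sv, cv, ← hr, hit, show (3:ZMod 4)+1 = 0 by decide, hs3, hv2,
      Complex.real_smul, Complex.real_smul]
    push_cast; ring

lemma eps_sq : d.eps^2 = 1 := by
  rw [eps]; split_ifs <;> norm_num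

lemma cv_sq (n : ℤ) :
    (d.F (d.cv n))^2 = 1 - (((dist ((d.t.seq n).v 0) ((d.t.seq n).v 2))^2 - 8)/8)^2 := by
  set z := d.cv n / d.e0 with hz
  have he0 : d.e0 ≠ 0 := d.e0_ne
  have hz1 : z.re^2 + z.im^2 = 1 := by
    have h1 : ‖z‖ = 1 := by
      rw [hz, norm_div, d.norm_cv n, d.norm_e0]; norm_num
    have h2 := normsq_eq z
    rw [h1] at h2
    linarith [h2]
  obtain ⟨α, β, hα, hβ, hdec⟩ := d.diag_decomp n
  obtain ⟨c, hc0, hcev⟩ := d.sv_par n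
  have hc1 : c = 1 ∨ c = -1 := by
    rcases d.sv_par' n with h | h
    · left
      have h2 : (c:ℂ) * d.e0 = 1 * d.e0 := by
        rw [one_mul, ← Complex.real_smul, ← hcev, h]
      have := mul_right_cancel₀ he0 h2
      exact_mod_cast this
    · right
      have h2 : (c:ℂ) * d.e0 = (-1) * d.e0 := by
        rw [← Complex.real_smul, ← hcev, h]; ring
      have := mul_right_cancel₀ he0 h2
      exact_mod_cast this
  set w : ℂ := ((α*c : ℝ) : ℂ) + ((β:ℝ):ℂ) * z with hw
  have hcv : d.cv n = z * d.e0 := by rw [hz]; field_simp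
  have hveq : (d.t.seq n).v 2 - (d.t.seq n).v 0 = w * d.e0 := by
    rw [hdec, hcev, hcv, Complex.real_smul, Complex.real_smul, Complex.real_smul, hw]
    push_cast; ring
  have hdd : dist ((d.t.seq n).v 0) ((d.t.seq n).v 2) = ‖w‖ * 2 := by
    rw [dist_eq_norm, ← norm_neg, neg_sub, hveq, norm_mul, d.norm_e0]
  have hwre : w.re = α*c + β*z.re := by
    rw [hw]; simp [Complex.add_re, Complex.mul_re]
  have hwim : w.im = β*z.im := by
    rw [hw]; simp [Complex.add_im, Complex.mul_im]
  have hwsq := normsq_eq w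
  have hg : (α*c*β)^2 = 1 := by
    rcases hα with rfl|rfl <;> rcases hβ with rfl|rfl <;> rcases hc1 with rfl|rfl <;> norm_num
  have hFv : d.F (d.cv n) = d.eps * z.im := by rw [F, hz]
  have heps := d.eps_sq
  rw [hFv, hdd]
  have hα2 : α^2 = 1 := by rcases hα with rfl|rfl <;> norm_num
  have hβ2 : β^2 = 1 := by rcases hβ with rfl|rfl <;> norm_num
  have hc2 : c^2 = 1 := by rcases hc1 with rfl|rfl <;> norm_num
  have hwsq' : ‖w‖^2 = 2 + 2*(α*c*β)*z.re := by
    rw [hwsq, hwre, hwim]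
    nlinarith [hz1, hα2, hβ2, hc2]
  nlinarith [hwsq', heps, hz1, hg, sq_nonneg (‖w‖)]

lemma F_cont : Continuous d.F := by
  unfold F
  fun_prop

lemma exists_w0 : ∃ w0 : ℝ, 0 < w0 ∧ ∀ n : ℤ, w0 ≤ d.F (d.cv n) := by
  have hFin := T.finite_angles
  set ffun : ℝ → ℝ := fun x => Real.sqrt (1 - ((x^2 - 8)/8)^2) with hffun
  have hval : ∀ n : ℤ, d.F (d.cv n) = ffun (dist ((d.t.seq n).v 0) ((d.t.seq n).v 2)) := by
    intro n
    have h1 := d.cv_sq n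
    have h2 := d.F_pos n
    rw [hffun]
    simp only
    rw [← h1, Real.sqrt_sq h2.le]
  set W := (hFin.toFinset.image ffun).filter (fun x => 0 < x) with hW
  have hmem : ∀ n : ℤ, d.F (d.cv n) ∈ W := by
    intro n
    rw [hW, Finset.mem_filter]
    constructor
    · rw [Finset.mem_image]
      refine ⟨dist ((d.t.seq n).v 0) ((d.t.seq n).v 2), ?_, (hval n).symm⟩
      rw [Set.Finite.mem_toFinset]
      exact ⟨d.t.seq n, d.t.mem n, rfl⟩
    · exact d.F_pos n
  have hne : W.Nonempty := ⟨_, hmem 0⟩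
  refine ⟨W.min' hne, ?_, fun n => Finset.min'_le W _ (hmem n)⟩
  have hmm := W.min'_mem hne
  exact (Finset.mem_filter.mp hmm).2

lemma q_cont : Continuous (fun τ => d.F (d.P τ)) := d.F_cont.comp d.P_cont

lemma q_surj : Function.Surjective (fun τ => d.F (d.P τ)) := by
  obtain ⟨w0, hw0, hw⟩ := d.exists_w0
  have hmu : ∀ n : ℤ, d.F (d.P (n:ℝ)) = d.F (d.mu n) := by
    intro n; rw [P, pwPath_int]
  have hgrow : ∀ n : ℕ, (d.F (d.mu 0) + n * w0 ≤ d.F (d.mu (n:ℤ))) ∧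
      (d.F (d.mu (-(n:ℤ))) ≤ d.F (d.mu 0) - n * w0) := by
    intro n
    induction n with
    | zero => simp
    | succ k ih =>
      constructor
      · have hstep : d.F (d.mu (k:ℤ)) + w0 ≤ d.F (d.mu ((k:ℤ)+1)) := by
          rw [d.mu_step (k:ℤ), d.F_add]
          linarith [hw (k:ℤ)]
        have h1 := ih.1
        push_cast
        push_cast at h1
        have : ((k:ℤ):ℝ) + 1 = ((k:ℝ)+1) := by push_cast; ring
        rw [show ((k:ℕ)+1 : ℤ) = (k:ℤ)+1 by push_cast; ring]
        nlinarith [hstep, h1]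
      · have hstep : d.F (d.mu (-(k:ℤ)-1)) + w0 ≤ d.F (d.mu (-(k:ℤ))) := by
          have := d.mu_step (-(k:ℤ)-1)
          rw [show -(k:ℤ)-1+1 = -(k:ℤ) by ring] at this
          rw [this, d.F_add]
          linarith [hw (-(k:ℤ)-1)]
        have h1 := ih.2
        push_cast
        push_cast at h1
        rw [show -((k:ℕ)+1 : ℤ) = -(k:ℤ)-1 by push_cast; ring]
        nlinarith [hstep, h1]
  apply Continuous.surjective d.q_cont
  · apply Filter.tendsto_atTop_atTop_of_monotone d.FP_mono.monotone
    intro b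
    obtain ⟨n, hn⟩ := exists_nat_ge ((b - d.F (d.mu 0))/w0)
    refine ⟨((n:ℤ):ℝ), ?_⟩
    rw [hmu]
    have h1 := (hgrow n).1
    rw [div_le_iff₀ hw0] at hn
    linarith
  · apply Filter.tendsto_atBot_atBot_of_monotone d.FP_mono.monotone
    intro b
    obtain ⟨n, hn⟩ := exists_nat_ge ((d.F (d.mu 0) - b)/w0)
    refine ⟨((-(n:ℤ) : ℤ):ℝ), ?_⟩
    rw [hmu]
    have h1 := (hgrow n).2
    rw [div_le_iff₀ hw0] at hn
    linarith

lemma exists_graph : ∃ Φ : ℝ → ℝ, Continuous Φ ∧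
    (∀ υ : ℝ, Φ (d.F (d.P υ)) = ((d.P υ) / d.e0).re) ∧
    Function.Surjective (fun τ => d.F (d.P τ)) := by
  have hsurj := d.q_surj
  set E := StrictMono.orderIsoOfSurjective _ d.FP_mono hsurj with hE
  have hEapp : ∀ υ, E υ = d.F (d.P υ) := fun υ => rfl
  have hsymm : Continuous (E.symm : ℝ → ℝ) := OrderIso.continuous E.symm
  refine ⟨fun γ => ((d.P (E.symm γ)) / d.e0).re, ?_, ?_, hsurj⟩
  · exact Complex.continuous_re.comp ((d.P_cont.comp hsymm).div_const _)
  · intro υ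
    show ((d.P (E.symm (d.F (d.P υ)))) / d.e0).re = ((d.P υ) / d.e0).re
    have hsy : E.symm (d.F (d.P υ)) = υ := by
      rw [← hEapp, OrderIso.symm_apply_apply]
    rw [hsy]

end TD

lemma Rhombus.center_coords (r : Rhombus) :
    r.center = r.v 0 + (1/2 : ℝ) • r.s 0 + (1/2 : ℝ) • r.s (0+1) := by
  rw [Rhombus.center]
  have h2 : r.v 2 = r.v 0 + r.s 0 + r.s (0+1) := by
    have := r.v_two 0
    rwa [show (0:ZMod 4)+2 = 2 by decide] at this
  rw [h2, Complex.real_smul, Complex.real_smul]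
  push_cast
  ring

lemma Rhombus.center_interior (r : Rhombus) : r.center ∈ interior r.region := by
  rw [r.center_coords]
  exact r.mem_interior 0 (by norm_num) (by norm_num)

lemma near_interior {r : Rhombus} {p : ℂ} (hp : p ∈ r.region) {ε : ℝ} (hε : 0 < ε) :
    ∃ u ∈ interior r.region, dist u p < ε := by
  set w := r.center with hwdef
  have hw : w ∈ interior r.region := r.center_interior
  by_cases hwp : w = p
  · exact ⟨w, hw, by rw [hwp]; simpa using hε⟩
  have hnorm : 0 < ‖w - p‖ := by
    rw [norm_pos_iff, sub_ne_zero]; exact hwp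
  set s : ℝ := min (1/2) (ε/(2*(‖w - p‖+1))) with hs
  have hs0 : 0 < s := by
    apply lt_min (by norm_num)
    positivity
  have hs1 : s ≤ 1/2 := min_le_left _ _
  set u := s • w + (1 - s) • p with hu
  have humem : u ∈ interior r.region := by
    have hconv := convex_convexHull ℝ (Set.range r.v)
    have := hconv.openSegment_interior_closure_subset_interior hw (subset_closure hp)
    apply this
    exact ⟨s, 1-s, hs0, by linarith, by ring, rfl⟩
  refine ⟨u, humem, ?_⟩
  have hup : u - p = s • (w - p) := by
    rw [hu, Complex.real_smul, Complex.real_smul, Complex.real_smul]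
    push_cast
    ring
  rw [dist_eq_norm, hup, norm_smul, Real.norm_eq_abs, abs_of_pos hs0]
  have hs2 : s ≤ ε/(2*(‖w - p‖+1)) := min_le_right _ _
  have h3 : s * ‖w - p‖ ≤ ε/(2*(‖w - p‖+1)) * ‖w - p‖ := by
    apply mul_le_mul_of_nonneg_right hs2 (norm_nonneg _)
  have h4 : ε/(2*(‖w - p‖+1)) * ‖w - p‖ < ε := by
    rw [div_mul_eq_mul_div, div_lt_iff₀ (by positivity)]
    nlinarith
  linarith

lemma interior_touch {T : RhombusTiling} {r r' : Rhombus} (hr : r ∈ T.rhombi)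
    (hr' : r' ∈ T.rhombi) {z : ℂ} (hz : z ∈ r.region) (hz' : z ∈ interior r'.region) :
    r = r' := by
  by_contra hne
  rcases Metric.isOpen_iff.mp isOpen_interior z hz' with ⟨ε, hε, hball⟩
  obtain ⟨u, hu, hud⟩ := near_interior hz hε
  have hu' : u ∈ interior r'.region := hball (Metric.mem_ball.mpr hud)
  have := T.int_disjoint r hr r' hr' hne
  rw [Set.eq_empty_iff_forall_notMem] at this
  exact this u ⟨hu, hu'⟩

namespace TD

variable {T : RhombusTiling} (d : TD T)

lemma mu_coords (n : ℤ) :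
    d.mu n = (d.t.seq n).v (d.it n) + (1/2 : ℝ) • (d.t.seq n).s (d.it n)
      + (0:ℝ) • (d.t.seq n).s (d.it n + 1) := by
  rw [mu, (d.t.seq n).mid_eq (d.it n)]

lemma mu_mem (n : ℤ) : d.mu n ∈ (d.t.seq n).region := by
  rw [d.mu_coords n]
  exact (d.t.seq n).mem_region _ (by norm_num) (by norm_num)

lemma mu_mem_prev (n : ℤ) : d.mu n ∈ (d.t.seq (n-1)).region := by
  have h := d.mu_step (n-1)
  rw [show n-1+1 = n by ring] at h
  have hxy : d.mu n = (d.t.seq (n-1)).v (d.it (n-1)) + (1/2 : ℝ) • (d.t.seq (n-1)).s (d.it (n-1))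
      + (1:ℝ) • (d.t.seq (n-1)).s (d.it (n-1) + 1) := by
    rw [h, d.mu_coords (n-1), cv]
    simp only [Complex.real_smul]
    push_cast
    ring
  rw [hxy]
  exact (d.t.seq (n-1)).mem_region _ (by norm_num) (by norm_num)

lemma mu_not_interior (n : ℤ) : d.mu n ∉ interior (d.t.seq n).region := by
  have h := d.mu_coords n
  intro hc
  apply (d.t.seq n).not_interior (d.it n) (a := 1/2)
  rw [h] at hc
  simpa using hc

lemma P_formula (τ : ℝ) : d.P τ = d.mu ⌊τ⌋ + (τ - ⌊τ⌋) • d.cv ⌊τ⌋ := rfl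

lemma P_coords (τ : ℝ) :
    d.P τ = (d.t.seq ⌊τ⌋).v (d.it ⌊τ⌋) + (1/2 : ℝ) • (d.t.seq ⌊τ⌋).s (d.it ⌊τ⌋)
      + (τ - ⌊τ⌋) • (d.t.seq ⌊τ⌋).s (d.it ⌊τ⌋ + 1) := by
  rw [P_formula, d.mu_coords ⌊τ⌋, cv]
  simp only [Complex.real_smul]
  push_cast
  ring

lemma P_mem (τ : ℝ) : d.P τ ∈ (d.t.seq ⌊τ⌋).region := by
  rw [d.P_coords τ]
  apply (d.t.seq ⌊τ⌋).mem_region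
  · norm_num
  · constructor
    · linarith [Int.floor_le τ]
    · linarith [Int.lt_floor_add_one τ]

lemma P_int_mem {τ : ℝ} (h : ((⌊τ⌋ : ℝ)) < τ) :
    d.P τ ∈ interior (d.t.seq ⌊τ⌋).region := by
  rw [d.P_coords τ]
  apply (d.t.seq ⌊τ⌋).mem_interior
  · norm_num
  · constructor
    · linarith
    · linarith [Int.lt_floor_add_one τ]

/-- A midpoint of a transversal edge of one track cannot coincide with a midpoint of a
transversal edge of another track in a non-parallel direction. -/
lemma no_double_midpoint (d' : TD T) {n n' : ℤ} (hz : d.mu n = d'.mu n')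
    (hnp : ((d'.sv n' / d.e0)).im ≠ 0) : False := by
  set e := d.e0 with he'
  have he : e ≠ 0 := d.e0_ne
  set r := d.t.seq n with hrdef
  set rm := d.t.seq (n-1) with hrmdef
  set z := d.mu n with hzdef
  -- levels
  have hpar1 : ((r.s (d.it n))/e).im = 0 := by
    have := d.sv_im0 n; rwa [sv] at this
  have hpar2 : ((rm.s (d.it (n-1) + 2))/e).im = 0 := by
    rw [rm.s_two (d.it (n-1)), neg_div, Complex.neg_im]
    have := d.sv_im0 (n-1); rw [sv] at this
    rw [hrmdef, this, neg_zero]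
  -- half disks
  obtain ⟨δ1, hδ1, hdisk1⟩ := r.half_disk he (d.it n) hpar1
  obtain ⟨δ2, hδ2, hdisk2⟩ := rm.half_disk he (d.it (n-1) + 2) hpar2
  -- midpoints both equal z
  have hmid1 : (r.v (d.it n) + r.v (d.it n + 1))/2 = z := rfl
  have hmid2 : (rm.v (d.it (n-1) + 2) + rm.v (d.it (n-1) + 2 + 1))/2 = z := by
    have := sideEnds_mid (d.match_edge (n-1))
    rw [show n-1+1 = n by ring] at this
    exact this
  -- levels at z
  have hlev1 : (z/e).im = ((r.v (d.it n))/e).im := by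
    rw [← hmid1]
    exact r.im_mid (d.it n) hpar1
  have hlev2 : (z/e).im = ((rm.v (d.it (n-1) + 2))/e).im := by
    rw [← hmid2]
    exact rm.im_mid (d.it (n-1) + 2) hpar2
  -- sigma values
  set σ1 := ((r.s (d.it n + 1))/e).im with hσ1
  set σ2 := ((rm.s (d.it (n-1) + 2 + 1))/e).im with hσ2
  have hσ1ne : σ1 ≠ 0 := r.sigma_ne he (d.it n) hpar1
  have hσ2ne : σ2 ≠ 0 := rm.sigma_ne he (d.it (n-1) + 2) hpar2
  -- the crossing edge direction
  set κ := ((d'.sv n')/e).im with hκ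
  have hκne : κ ≠ 0 := hnp
  -- points of the edge of rp near z belong to rp.region
  have hedge : ∀ t : ℝ, t ∈ Icc (-(1:ℝ)/2) (1/2) → z + t • d'.sv n' ∈ (d'.t.seq n').region := by
    intro t ht
    have hz' : z = d'.mu n' := hz
    have heq : z + t • d'.sv n' = (d'.t.seq n').v (d'.it n')
        + (1/2 + t : ℝ) • (d'.t.seq n').s (d'.it n')
        + (0:ℝ) • (d'.t.seq n').s (d'.it n' + 1) := by
      rw [hz', d'.mu_coords n', sv]
      simp only [Complex.real_smul]
      push_cast
      ring
    rw [heq]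
    apply (d'.t.seq n').mem_region
    · constructor <;> [linarith [ht.1]; linarith [ht.2]]
    · norm_num
  -- level of the edge point
  have hlevp : ∀ t : ℝ, ((z + t • d'.sv n')/e).im = (z/e).im + t * κ := by
    intro t
    rw [im_div_add, im_div_smul, hκ]
  -- key: from a half-disk at z we obtain that rp equals the disk's rhombus
  have key : ∀ (δ σ : ℝ) (R : Rhombus), 0 < δ → σ ≠ 0 →
      (∀ x : ℂ, dist x z < δ → 0 < σ * ((x/e).im - (z/e).im) → x ∈ interior R.region) →
      R ∈ T.rhombi → d'.t.seq n' = R := by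
    intro δ σ R hδ hσ hdisk hmem
    set A := σ * κ with hA
    have hAne : A ≠ 0 := mul_ne_zero hσ hκne
    have hAabs : 0 < |A| := abs_pos.mpr hAne
    set η : ℝ := min (1/(2* (|A| + 1))) (δ/(4* (|A| + 1))) with hη
    have hη0 : 0 < η := lt_min (by positivity) (by positivity)
    set t := A * η with ht
    have htabs : |t| = |A| * η := by rw [ht, abs_mul, abs_of_pos hη0]
    have htmem : t ∈ Icc (-(1:ℝ)/2) (1/2) := by
      have h2 : η ≤ 1/(2* (|A| + 1)) := min_le_left _ _
      have h3 : |t| ≤ 1/2 := by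
        rw [htabs]
        calc |A| * η ≤ |A| * (1/(2* (|A| + 1))) := by
              apply mul_le_mul_of_nonneg_left h2 (abs_nonneg _)
        _ ≤ 1/2 := by
              have hrr : |A| * (1/(2* (|A| + 1))) = |A| / (2* (|A| + 1)) := by ring
              rw [hrr, div_le_div_iff₀ (by positivity) (by norm_num)]
              nlinarith
      constructor <;> [linarith [abs_le.mp h3 |>.1]; linarith [abs_le.mp h3 |>.2]]
    set p := z + t • d'.sv n' with hp
    have hpmem : p ∈ (d'.t.seq n').region := hedge t htmem
    have hplev : (p/e).im - (z/e).im = t * κ := by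
      rw [hp, hlevp t]; ring
    have hpz : dist p z < δ/2 := by
      rw [hp, dist_eq_norm]
      have h1 : z + t • d'.sv n' - z = t • d'.sv n' := by ring
      rw [h1, norm_smul, Real.norm_eq_abs, d'.norm_sv n']
      have h2 : η ≤ δ/(4* (|A| + 1)) := min_le_right _ _
      rw [htabs]
      calc |A| * η * 2 ≤ |A| * (δ/(4* (|A| + 1))) * 2 := by
            apply mul_le_mul_of_nonneg_right
              (mul_le_mul_of_nonneg_left h2 (abs_nonneg _)) (by norm_num)
      _ < δ/2 := by
            have hrr : |A| * (δ/(4* (|A| + 1))) * 2 = (|A| *δ*2)/(4* (|A| + 1)) := by ring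
            rw [hrr, div_lt_div_iff₀ (by positivity) (by norm_num)]
            nlinarith
    set ε : ℝ := min (δ/2) (A^2*η/(2* (|σ| + 1))) with hε
    have hε0 : 0 < ε := by
      apply lt_min (by positivity)
      have : 0 < A^2 := by positivity
      positivity
    obtain ⟨u, humem, hud⟩ := near_interior hpmem hε0
    have hu1 : dist u z < δ :=
      calc dist u z ≤ dist u p + dist p z := dist_triangle u p z
      _ < ε + δ/2 := by linarith [hud]
      _ ≤ δ/2 + δ/2 := by
            have hh : ε ≤ δ/2 := min_le_left _ _
            linarith
      _ = δ := by ring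
    have hu2 : 0 < σ * ((u/e).im - (z/e).im) := by
      have hudecomp : u = p + (u - p) := by ring
      have him : (u/e).im = (p/e).im + ((u-p)/e).im := by
        conv_lhs => rw [hudecomp]
        rw [im_div_add]
      have hbound : |((u-p)/e).im| ≤ ‖u - p‖/2 := by
        calc |((u-p)/e).im| ≤ ‖(u-p)/e‖ := Complex.abs_im_le_norm _
        _ = ‖u - p‖/‖e‖ := by rw [norm_div]
        _ = ‖u - p‖/2 := by rw [he', d.norm_e0]
      have hup : ‖u - p‖ < ε := by rwa [dist_eq_norm] at hud
      have hεle : ε ≤ A^2*η/(2* (|σ| + 1)) := min_le_right _ _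
      have hσtκ : σ * (t*κ) = A^2 * η := by rw [ht, hA]; ring
      have habs : |σ * ((u-p)/e).im| ≤ |σ| * (‖u-p‖/2) := by
        rw [abs_mul]
        apply mul_le_mul_of_nonneg_left hbound (abs_nonneg _)
      have hfin : |σ| * (‖u-p‖/2) < A^2 * η / 2 := by
        have h5 : |σ| * (‖u-p‖/2) ≤ |σ| * (ε/2) := by
          apply mul_le_mul_of_nonneg_left (by linarith) (abs_nonneg _)
        have h6 : |σ| * (ε/2) ≤ |σ| * (A^2*η/(4* (|σ| + 1))) := by
          apply mul_le_mul_of_nonneg_left ?_ (abs_nonneg _)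
          have hrr : A^2*η/(2* (|σ| + 1))/2 = A^2*η/(4* (|σ| + 1)) := by
            rw [div_div]
            congr 1
            ring
          linarith [hεle]
        have h7 : |σ| * (A^2*η/(4* (|σ| + 1))) < A^2 * η / 2 := by
          have hrr : |σ| * (A^2*η/(4* (|σ| + 1))) = (|σ| * (A^2*η))/(4* (|σ| + 1)) := by ring
          rw [hrr, div_lt_div_iff₀ (by positivity) (by norm_num)]
          have hA2 : 0 < A^2 * η := by positivity
          nlinarith [abs_nonneg σ]
        linarith
      have := abs_le.mp (le_of_lt (lt_of_le_of_lt habs hfin))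
      calc (0:ℝ) < A^2 * η - A^2 * η / 2 := by
            have : 0 < A^2*η := by positivity
            linarith
      _ ≤ σ * (t*κ) + σ * ((u-p)/e).im := by
            rw [hσtκ]
            linarith [this.1]
      _ = σ * ((u/e).im - (z/e).im) := by
            rw [him]
            linear_combination (-σ) * hplev
    have huR : u ∈ interior R.region := hdisk u hu1 hu2
    by_contra hne
    have hdis := T.int_disjoint (d'.t.seq n') (d'.t.mem n') R hmem hne
    rw [Set.eq_empty_iff_forall_notMem] at hdis
    exact hdis u ⟨humem, huR⟩
  -- apply with r and rm
  have hr1 : d'.t.seq n' = r := by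
    apply key δ1 σ1 r hδ1 hσ1ne ?_ (d.t.mem n)
    intro x hdz hcond
    apply hdisk1 x
    · rwa [hmid1]
    · rwa [hlev1] at hcond
  have hr2 : d'.t.seq n' = rm := by
    apply key δ2 σ2 rm hδ2 hσ2ne ?_ (d.t.mem (n-1))
    intro x hdz hcond
    apply hdisk2 x
    · rwa [hmid2]
    · rwa [hlev2] at hcond
  exact d.prev_ne n (hr1.symm.trans hr2)

end TD

namespace TD

variable {T : RhombusTiling} (d : TD T)

lemma sideEnds_of_mu (n : ℤ) {w : ℂ} (hw : w = d.sv n ∨ w = - d.sv n) :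
    (d.t.seq n).sideEnds (d.it n) = {d.mu n - w/2, d.mu n + w/2} := by
  have hv0 : (d.t.seq n).v (d.it n) = d.mu n - d.sv n/2 := by
    rw [mu, sv, (d.t.seq n).v_one (d.it n), Rhombus.s]
    ring
  have hv1 : (d.t.seq n).v (d.it n + 1) = d.mu n + d.sv n/2 := by
    rw [mu, sv, (d.t.seq n).v_one (d.it n), Rhombus.s]
    ring
  rcases hw with rfl | rfl
  · rw [Rhombus.sideEnds, hv0, hv1]
  · rw [Rhombus.sideEnds, hv0, hv1]
    have e1 : d.mu n - (- d.sv n)/2 = d.mu n + d.sv n/2 := by ring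
    have e2 : d.mu n + (- d.sv n)/2 = d.mu n - d.sv n/2 := by ring
    rw [e1, e2, Set.pair_comm]

lemma P_eq_mu {τ : ℝ} (h : ((⌊τ⌋:ℝ)) = τ) : d.P τ = d.mu ⌊τ⌋ := by
  rw [P_formula]
  have h2 : τ - ((⌊τ⌋:ℝ)) = 0 := by linarith
  rw [h2, zero_smul, add_zero]

/-- intersections of the two midpoint paths happen only at centers of common tiles -/
lemma cross (d' : TD T)
    (hdiff : ∀ a b : ℤ, d.t.seq a = d'.t.seq b →
      (d'.it b = d.it a + 1 ∨ d'.it b = d.it a + 3))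
    {τ υ : ℝ} (hPP : d.P τ = d'.P υ) :
    ∃ n n' : ℤ, d.t.seq n = d'.t.seq n' ∧ τ = (n:ℝ) + 1/2 := by
  set n := ⌊τ⌋ with hn
  set n' := ⌊υ⌋ with hn'
  rcases eq_or_lt_of_le (Int.floor_le τ) with hτ | hτ
  · rcases eq_or_lt_of_le (Int.floor_le υ) with hυ | hυ
    · -- both are edge midpoints : impossible
      exfalso
      have hzz : d.mu n = d'.mu n' := by
        rw [← d.P_eq_mu hτ, ← d'.P_eq_mu hυ]
        exact hPP
      by_cases hEE : (d.t.seq n).sideEnds (d.it n) = (d'.t.seq n').sideEnds (d'.it n')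
      · by_cases hrr : d.t.seq n = d'.t.seq n'
        · have hEE2 : (d.t.seq n).sideEnds (d.it n) = (d.t.seq n).sideEnds (d'.it n') := by
            rw [hEE, hrr]
          have hii := (d.t.seq n).sideEnds_inj hEE2
          rcases hdiff n n' hrr with hp | hp
          · rw [hii] at hp
            have h0 : d.it n + 0 = d.it n + 1 := by rw [add_zero]; exact hp
            exact absurd (add_left_cancel h0) (by decide)
          · rw [hii] at hp
            have h0 : d.it n + 0 = d.it n + 3 := by rw [add_zero]; exact hp
            exact absurd (add_left_cancel h0) (by decide)
        · obtain ⟨j, hj⟩ := d.prev_edge n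
          have hnb : d.t.seq (n-1) = d'.t.seq n' :=
            neighbor_unique (d.t.mem n) (d.t.mem (n-1)) (d'.t.mem n')
              (Ne.symm (d.prev_ne n)) (fun hc => hrr hc.symm) hj hEE
          have hme := d.match_edge (n-1)
          rw [show n-1+1 = n by ring] at hme
          rw [← hnb] at hEE
          have h2 := (d.t.seq (n-1)).sideEnds_inj (hme.symm.trans hEE)
          rcases hdiff (n-1) n' hnb with hp | hp
          · rw [h2] at hp
            have h0 := add_left_cancel hp
            exact absurd h0 (by decide)
          · rw [h2] at hp
            have h0 := add_left_cancel hp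
            exact absurd h0 (by decide)
      · -- edges distinct : non-parallel, apply no_double_midpoint
        apply d.no_double_midpoint d' hzz
        intro hpar0
        apply hEE
        -- sv' n' is a real multiple of e0, hence of sv n, hence = ± sv n
        have he0 : d.e0 ≠ 0 := d.e0_ne
        have hreal : d'.sv n' = (((d'.sv n' / d.e0).re : ℝ)) • d.e0 := by
          rw [Complex.real_smul]
          have : (d'.sv n' / d.e0) = (((d'.sv n' / d.e0).re : ℝ) : ℂ) := by
            apply Complex.ext
            · simp
            · simp [hpar0]
          rw [← this, div_mul_cancel₀ _ he0]
        obtain ⟨c0, hc00, hc0⟩ := d.sv_par n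
        set cr := (d'.sv n' / d.e0).re with hcr
        have hsv' : d'.sv n' = (cr/c0 : ℝ) • d.sv n := by
          rw [hc0, smul_smul, div_mul_cancel₀]
          · exact hreal
          · exact hc00
        have hnorm : ‖d'.sv n'‖ = |cr/c0| * ‖d.sv n‖ := by
          rw [hsv', norm_smul, Real.norm_eq_abs]
        rw [d'.norm_sv n', d.norm_sv n] at hnorm
        have habs : |cr/c0| = 1 := by linarith
        have hpm : d'.sv n' = d.sv n ∨ d'.sv n' = - d.sv n := by
          rcases (abs_eq (by norm_num : (0:ℝ) ≤ 1)).mp habs with hc | hc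
          · left; rw [hsv', hc, one_smul]
          · right; rw [hsv', hc, neg_smul, one_smul]
        have hpm' : d.sv n = d'.sv n' ∨ d.sv n = - d'.sv n' := by
          rcases hpm with h | h
          · exact Or.inl h.symm
          · refine Or.inr ?_
            rw [h]
            ring
        have hs1 := d.sideEnds_of_mu n (Or.inl rfl)
        have hs2 := d'.sideEnds_of_mu n' hpm'
        rw [hs1, hs2, hzz]
    · -- τ midpoint, υ interior : impossible
      exfalso
      have hz1 : d.P τ = d.mu n := d.P_eq_mu (by rw [← hn]; exact hτ)
      have hz2 : d.P τ ∈ interior (d'.t.seq n').region := by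
        rw [hPP]
        exact d'.P_int_mem (by rw [← hn']; exact hυ)
      have heq : d.t.seq n = d'.t.seq n' := by
        apply interior_touch (d.t.mem n) (d'.t.mem n') ?_ hz2
        rw [hz1]
        exact d.mu_mem n
      rw [← heq] at hz2
      rw [hz1] at hz2
      exact d.mu_not_interior n hz2
  · rcases eq_or_lt_of_le (Int.floor_le υ) with hυ | hυ
    · -- τ interior, υ midpoint : impossible
      exfalso
      have hz1 : d'.P υ = d'.mu n' := d'.P_eq_mu (by rw [← hn']; exact hυ)
      have hz2 : d'.P υ ∈ interior (d.t.seq n).region := by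
        rw [← hPP]
        exact d.P_int_mem (by rw [← hn]; exact hτ)
      have heq : d'.t.seq n' = d.t.seq n := by
        apply interior_touch (d'.t.mem n') (d.t.mem n) ?_ hz2
        rw [hz1]
        exact d'.mu_mem n'
      rw [← heq] at hz2
      rw [hz1] at hz2
      exact d'.mu_not_interior n' hz2
    · -- both interior : the common tile, and τ is the half point
      have h1 : d.P τ ∈ interior (d.t.seq n).region := d.P_int_mem (by rw [← hn]; exact hτ)
      have h2 : d.P τ ∈ interior (d'.t.seq n').region := by
        rw [hPP]
        exact d'.P_int_mem (by rw [← hn']; exact hυ)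
      have hshared : d.t.seq n = d'.t.seq n' := by
        by_contra hne
        have hdis := T.int_disjoint (d.t.seq n) (d.t.mem n) (d'.t.seq n') (d'.t.mem n') hne
        rw [Set.eq_empty_iff_forall_notMem] at hdis
        exact hdis (d.P τ) ⟨h1, h2⟩
      refine ⟨n, n', hshared, ?_⟩
      -- cv' n' = ± sv n
      have hcv' : d'.cv n' = d.sv n ∨ d'.cv n' = - d.sv n := by
        rcases hdiff n n' hshared with hp | hp
        · right
          rw [cv, sv, hp, ← hshared, show d.it n + 1 + 1 = d.it n + 2 by ring]
          exact (d.t.seq n).s_two (d.it n)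
        · left
          rw [cv, sv, hp, ← hshared]
          have h4 : d.it n + 3 + 1 = d.it n := by
            rw [add_assoc, show (3:ZMod 4)+1 = 0 by decide, add_zero]
          rw [h4]
      have hPτ : d.P τ = d.mu n + ((τ:ℂ) - (n:ℂ)) * d.cv n := by
        rw [P_formula, Complex.real_smul, ← hn]
        push_cast
        ring
      have hPυ : d'.P υ = d'.mu n' + ((υ:ℂ) - (n':ℂ)) * d'.cv n' := by
        rw [P_formula, Complex.real_smul, ← hn']
        push_cast
        ring
      have E1 := (hPτ.symm.trans hPP).trans hPυ
      have hc1 := d.center_eq n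
      have hc2 := d'.center_eq n'
      rw [hshared] at hc1
      have hkey : ((τ:ℂ) - (n:ℂ) - 1/2) * d.cv n = ((υ:ℂ) - (n':ℂ) - 1/2) * d'.cv n' := by
        linear_combination E1 + hc1 - hc2
      rcases hcv' with hc | hc <;> rw [hc] at hkey
      · have hz2 : (-(υ - (n':ℝ) - 1/2) : ℝ) • (d.t.seq n).s (d.it n)
            + ((τ - (n:ℝ) - 1/2) : ℝ) • (d.t.seq n).s (d.it n + 1) = 0 := by
          rw [Complex.real_smul, Complex.real_smul]
          rw [cv, sv] at hkey
          push_cast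
          linear_combination hkey
        have := ((d.t.seq n).indep hz2).2
        linarith
      · have hz2 : ((υ - (n':ℝ) - 1/2) : ℝ) • (d.t.seq n).s (d.it n)
            + ((τ - (n:ℝ) - 1/2) : ℝ) • (d.t.seq n).s (d.it n + 1) = 0 := by
          rw [Complex.real_smul, Complex.real_smul]
          rw [cv, sv] at hkey
          push_cast
          linear_combination hkey
        have := ((d.t.seq n).indep hz2).2
        linarith

end TD

lemma re_div_add (a b e : ℂ) : ((a+b)/e).re = (a/e).re + (b/e).re := by
  rw [add_div, Complex.add_re]

lemma re_div_smul (t : ℝ) (a e : ℂ) : (((t • a))/e).re = t * (a/e).re := by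
  rw [Complex.real_smul, mul_div_assoc, Complex.mul_re]
  simp

namespace TD

variable {T : RhombusTiling} (d : TD T)

lemma F_neg (x : ℂ) : d.F (-x) = - d.F x := by
  rw [F, F, neg_div, Complex.neg_im]
  ring

lemma eps_ne : d.eps ≠ 0 := by
  have := d.eps_sq
  intro h
  rw [h] at this
  norm_num at this

end TD

theorem part_two {T : RhombusTiling} (t t' : TrainTrack T)
    (hne : Set.range t.seq ≠ Set.range t'.seq) :
    (Set.range t.seq ∩ Set.range t'.seq).Subsingleton := by
  obtain ⟨d, rfl⟩ := t.exists_td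
  obtain ⟨d', rfl⟩ := t'.exists_td
  intro x hx y hy
  by_contra hxy
  obtain ⟨m, hm⟩ := hx.1
  obtain ⟨m', hm'⟩ := hx.2
  obtain ⟨k, hk⟩ := hy.1
  obtain ⟨k', hk'⟩ := hy.2
  -- different pairs at every shared tile
  have hdiff : ∀ a b : ℤ, d.t.seq a = d'.t.seq b →
      (d'.it b = d.it a + 1 ∨ d'.it b = d.it a + 3) := by
    intro a b hab
    obtain ⟨mφ, hmφ⟩ : ∃ mφ, d'.it b = d.it a + mφ := ⟨d'.it b - d.it a, by ring⟩
    rcases zmod4_cases mφ with h0 | h0 | h0 | h0 <;> subst h0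
    · exfalso
      apply hne
      exact d.same_pair_range d' hab (Or.inl (by rw [hmφ, add_zero]))
    · left; exact hmφ
    · exfalso
      apply hne
      exact d.same_pair_range d' hab (Or.inr hmφ)
    · right; exact hmφ
  -- crossing vectors of the first track at shared tiles
  have hcvpar : ∀ a b : ℤ, d.t.seq a = d'.t.seq b →
      (d.cv a = d'.e0 ∨ d.cv a = - d'.e0) := by
    intro a b hab
    have hsv' : d.cv a = d'.sv b ∨ d.cv a = - d'.sv b := by
      rcases hdiff a b hab with hp | hp
      · left
        rw [TD.cv, TD.sv, hp, hab]
      · right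
        rw [TD.cv, TD.sv, hp, hab]
        have := (d'.t.seq b).s_two (d.it a + 1)
        rw [show d.it a + 1 + 2 = d.it a + 3 by ring] at this
        rw [this]
        ring
    rcases hsv' with h1 | h1 <;> rcases d'.sv_par' b with h2 | h2
    · left; rw [h1, h2]
    · right; rw [h1, h2]
    · right; rw [h1, h2]
    · left; rw [h1, h2]; ring
  have hcveq : ∀ a b a2 b2 : ℤ, d.t.seq a = d'.t.seq b → d.t.seq a2 = d'.t.seq b2 →
      d.cv a = d.cv a2 := by
    intro a b a2 b2 h1 h2
    rcases hcvpar a b h1 with hca | hca <;> rcases hcvpar a2 b2 h2 with hcb | hcb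
    · rw [hca, hcb]
    · exfalso
      have f1 := d.F_pos a
      have f2 := d.F_pos a2
      rw [hca] at f1
      rw [hcb, d.F_neg] at f2
      linarith
    · exfalso
      have f1 := d.F_pos a
      have f2 := d.F_pos a2
      rw [hca, d.F_neg] at f1
      rw [hcb] at f2
      linarith
    · rw [hca, hcb]
  -- the F'-value of d-crossing vectors at shared tiles vanishes
  have hcv0 : ∀ a b : ℤ, d.t.seq a = d'.t.seq b → d'.F (d.cv a) = 0 := by
    intro a b hab
    rcases hcvpar a b hab with h1 | h1 <;> rw [TD.F, h1]
    · rw [div_self d'.e0_ne]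
      simp
    · rw [neg_div, div_self d'.e0_ne]
      simp
  -- the graph of the second track
  obtain ⟨Φ, hΦc, hΦeq, hsurj⟩ := d'.exists_graph
  set δf : ℝ → ℝ := fun τ => (d.P τ / d'.e0).re - Φ (d'.F (d.P τ)) with hδf
  have hδc : Continuous δf := by
    apply Continuous.sub
    · exact Complex.continuous_re.comp (d.P_cont.div_const _)
    · exact hΦc.comp (d'.F_cont.comp d.P_cont)
  have hzero : ∀ n n' : ℤ, d.t.seq n = d'.t.seq n' → δf ((n:ℝ) + 1/2) = 0 := by
    intro n n' hsh
    have h1 : d.P ((n:ℝ)+1/2) = d'.P ((n':ℝ)+1/2) := by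
      rw [d.P_half n, d'.P_half n', hsh]
    show (d.P ((n:ℝ)+1/2) / d'.e0).re - Φ (d'.F (d.P ((n:ℝ)+1/2))) = 0
    rw [h1, hΦeq ((n':ℝ)+1/2)]
    ring
  have hzero' : ∀ τ : ℝ, δf τ = 0 →
      ∃ n n' : ℤ, d.t.seq n = d'.t.seq n' ∧ τ = (n:ℝ) + 1/2 := by
    intro τ h0
    obtain ⟨υ, hυ⟩ := hsurj (d'.F (d.P τ))
    simp only at hυ
    have h0' : (d.P τ / d'.e0).re - Φ (d'.F (d.P τ)) = 0 := h0
    have hre : (d'.P υ / d'.e0).re = (d.P τ / d'.e0).re := by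
      calc (d'.P υ / d'.e0).re = Φ (d'.F (d'.P υ)) := (hΦeq υ).symm
      _ = Φ (d'.F (d.P τ)) := by rw [hυ]
      _ = (d.P τ / d'.e0).re := by linarith [h0']
    have him : (d'.P υ / d'.e0).im = (d.P τ / d'.e0).im := by
      have heps := d'.eps_ne
      rw [TD.F, TD.F] at hυ
      exact mul_left_cancel₀ heps hυ
    have hpt : d'.P υ = d.P τ := by
      have hq : d'.P υ / d'.e0 = d.P τ / d'.e0 := Complex.ext hre him
      have := congrArg (fun w => w * d'.e0) hq
      simpa [div_mul_cancel₀, d'.e0_ne] using this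
    exact d.cross d' hdiff hpt.symm
  -- local affine formula at a shared tile
  have hformula : ∀ (n n' : ℤ), d.t.seq n = d'.t.seq n' → ∀ τ : ℝ,
      (n:ℝ) < τ → τ < (n:ℝ)+1 → δf τ = (τ - ((n:ℝ)+1/2)) * (d.cv n / d'.e0).re := by
    intro n n' hsh τ hlo hhi
    have hPat : ∀ σ : ℝ, (n:ℝ) ≤ σ → σ < (n:ℝ)+1 → d.P σ = d.mu n + (σ - (n:ℝ)) • d.cv n := by
      intro σ h1 h2
      rw [TD.P, pwPath_eq_on d.mu d.cv n σ h1 (by push_cast; linarith)]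
    have hδat : ∀ σ : ℝ, (n:ℝ) ≤ σ → σ < (n:ℝ)+1 →
        δf σ = (d.mu n / d'.e0).re + (σ - n) * (d.cv n / d'.e0).re
          - Φ (d'.F (d.mu n)) := by
      intro σ h1 h2
      show (d.P σ / d'.e0).re - Φ (d'.F (d.P σ)) = _
      rw [hPat σ h1 h2]
      have hLadd : ((d.mu n + (σ - (n:ℝ)) • d.cv n) / d'.e0).re
          = (d.mu n / d'.e0).re + (σ-n) * (d.cv n / d'.e0).re := by
        rw [re_div_add, re_div_smul]
      have hFadd : d'.F (d.mu n + (σ - (n:ℝ)) • d.cv n)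
          = d'.F (d.mu n) + (σ-n) * d'.F (d.cv n) := by
        rw [d'.F_add, d'.F_smul]
      rw [hLadd, hFadd, hcv0 n n' hsh, mul_zero, add_zero]
    have h0 := hzero n n' hsh
    rw [hδat ((n:ℝ)+1/2) (by linarith) (by linarith)] at h0
    rw [hδat τ (le_of_lt hlo) hhi]
    linear_combination h0
  -- |L (cv)| = 1 at shared tiles
  have hLcv : ∀ a b : ℤ, d.t.seq a = d'.t.seq b →
      ((d.cv a / d'.e0).re = 1 ∨ (d.cv a / d'.e0).re = -1) := by
    intro a b hab
    rcases hcvpar a b hab with h1 | h1 <;> rw [h1]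
    · left
      rw [div_self d'.e0_ne, Complex.one_re]
    · right
      rw [neg_div, div_self d'.e0_ne, Complex.neg_re, Complex.one_re]
  -- main contradiction
  have main : ∀ mm kk mm' kk' : ℤ, mm < kk → d.t.seq mm = d'.t.seq mm' →
      d.t.seq kk = d'.t.seq kk' → False := by
    intro mm kk mm' kk' hlt hsh1 hsh2
    set τ1 : ℝ := (mm:ℝ) + 1/2 with hτ1
    set τ2 : ℝ := (kk:ℝ) + 1/2 with hτ2
    have hmmkk : (mm:ℝ) < (kk:ℝ) := by exact_mod_cast hlt
    have hmmkk1 : (mm:ℝ) + 1 ≤ (kk:ℝ) := by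
      have : (mm:ℝ) + 1 ≤ kk := by exact_mod_cast hlt
      linarith
    have hτlt : τ1 < τ2 := by rw [hτ1, hτ2]; linarith
    set S : Set ℝ := {τ | (τ ∈ Set.Icc τ1 τ2 ∧ δf τ = 0) ∧ τ < τ2} with hS
    have hS1 : τ1 ∈ S := by
      refine ⟨⟨⟨le_refl _, le_of_lt hτlt⟩, ?_⟩, hτlt⟩
      rw [hτ1]
      exact hzero mm mm' hsh1
    have hSsub : S ⊆ (fun nn : ℤ => (nn:ℝ)+1/2) '' (Set.Icc mm kk) := by
      rintro τ ⟨⟨hτmem, hτ0⟩, _⟩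
      obtain ⟨n, n', hsh, rfl⟩ := hzero' τ hτ0
      refine ⟨n, ?_, rfl⟩
      constructor
      · have := hτmem.1
        rw [hτ1] at this
        have : (mm:ℝ) ≤ n := by linarith
        exact_mod_cast this
      · have := hτmem.2
        rw [hτ2] at this
        have : (n:ℝ) ≤ kk := by linarith
        exact_mod_cast this
    have hSfin : S.Finite := Set.Finite.subset ((Set.finite_Icc mm kk).image _) hSsub
    obtain ⟨aM, haM, hmax⟩ := Set.Finite.exists_maximalFor id S hSfin ⟨τ1, hS1⟩
    have hmax' : ∀ b ∈ S, b ≤ aM := by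
      intro b hb
      by_contra hc
      push_neg at hc
      have := hmax (j := b) hb (le_of_lt hc)
      simp only [id] at this
      linarith
    obtain ⟨na, na', hshna, hna⟩ := hzero' aM haM.1.2
    have hτ1aM : τ1 ≤ aM := haM.1.1.1
    have haMτ2 : aM < τ2 := haM.2
    have hna_lt : na < kk := by
      have : (na:ℝ) + 1/2 < (kk:ℝ) + 1/2 := by rw [← hna, ← hτ2]; exact haMτ2
      have : (na:ℝ) < kk := by linarith
      exact_mod_cast this
    set pp : ℝ := (na:ℝ) + 3/4 with hpp
    set qq : ℝ := (kk:ℝ) + 1/4 with hqq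
    have hnakk : (na:ℝ) + 1 ≤ kk := by
      have : (na:ℝ) + 1 ≤ kk := by exact_mod_cast hna_lt
      linarith
    have haMpp : aM < pp := by rw [hna, hpp]; linarith
    have hppqq : pp ≤ qq := by rw [hpp, hqq]; linarith
    have hqqτ2 : qq < τ2 := by rw [hqq, hτ2]; linarith
    have hδpp : δf pp = (1/4) * (d.cv na / d'.e0).re := by
      rw [hformula na na' hshna pp (by rw [hpp]; linarith) (by rw [hpp]; linarith)]
      rw [hpp]
      ring
    have hδqq : δf qq = (-1/4) * (d.cv na / d'.e0).re := by
      rw [hformula kk kk' hsh2 qq (by rw [hqq]; linarith) (by rw [hqq]; linarith)]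
      rw [hcveq kk kk' na na' hsh2 hshna, hqq]
      ring
    -- no zero allowed in [pp, qq]
    have hnozero : ∀ τz ∈ Set.Icc pp qq, δf τz ≠ 0 := by
      intro τz hτz h0
      have hmem : τz ∈ S := by
        refine ⟨⟨⟨?_, ?_⟩, h0⟩, ?_⟩
        · linarith [hτz.1]
        · linarith [hτz.2, le_of_lt hqqτ2]
        · linarith [hτz.2]
      have := hmax' τz hmem
      linarith [hτz.1]
    have hcont : ContinuousOn δf (Set.Icc pp qq) := hδc.continuousOn
    rcases hLcv na na' hshna with hρ | hρ
    · -- δf pp = 1/4 > 0 > -1/4 = δf qq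
      have h1 : δf qq < 0 := by rw [hδqq, hρ]; norm_num
      have h2 : 0 < δf pp := by rw [hδpp, hρ]; norm_num
      have := intermediate_value_Icc' hppqq hcont
      have h3 : (0:ℝ) ∈ Set.Icc (δf qq) (δf pp) := ⟨le_of_lt h1, le_of_lt h2⟩
      obtain ⟨τz, hτzmem, hτz0⟩ := this h3
      exact hnozero τz hτzmem hτz0
    · have h1 : δf pp < 0 := by rw [hδpp, hρ]; norm_num
      have h2 : 0 < δf qq := by rw [hδqq, hρ]; norm_num
      have := intermediate_value_Icc hppqq hcont
      have h3 : (0:ℝ) ∈ Set.Icc (δf pp) (δf qq) := ⟨le_of_lt h1, le_of_lt h2⟩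
      obtain ⟨τz, hτzmem, hτz0⟩ := this h3
      exact hnozero τz hτzmem hτz0
  -- conclude
  have hsx : d.t.seq m = d'.t.seq m' := hm.trans hm'.symm
  have hsy : d.t.seq k = d'.t.seq k' := hk.trans hk'.symm
  have hmk : m ≠ k := by
    intro h
    apply hxy
    rw [← hm, ← hk, h]
  rcases lt_or_gt_of_ne hmk with h | h
  · exact main m k m' k' h hsx hsy
  · exact main k m k' m' h hsy hsx

/-- A train-track of a rhombus tiling of the plane cannot cross itself (it never visits
the same rhombus twice), and two distinct train-tracks cross at most once (they share at
most one rhombus). -/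
theorem train_track_crossings (T : RhombusTiling) :
    (∀ t : TrainTrack T, Function.Injective t.seq) ∧
    (∀ t t' : TrainTrack T, Set.range t.seq ≠ Set.range t'.seq →
      (Set.range t.seq ∩ Set.range t'.seq).Subsingleton) := by
  exact ⟨part_one, part_two⟩
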